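/- arXiv:0706.3327 — 3 statements merged into one kernel-verified Lean document; each statement's English description precedes it below -/
import Mathlib

section
/- The supertrace transfer matrix of the inhomogeneous fundamental gl(M|N) chain enjoys the full gl(M|N) symmetry: for all 1 ≤ a, b ≤ n and all u ∈ ℂ, [Δ(E_{ab}), st(u)] = 0 in End(H). -/
open scoped BigOperators

noncomputable section

namespace SuperSpin

/-- The ℤ₂-grading on `Fin n` (0-indexed): grade `0` for the first `M` indices,
grade `1` for the remaining ones.  `gr M i` is the grade of the (paper, 1-indexed)
index `i+1`. -/
def gr (M : ℕ) {n : ℕ} (i : Fin n) : ℕ := if (i : ℕ) < M then 0 else 1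

/-- `End(V ⊗ V)` for `V = ℂⁿ`, as matrices indexed by pairs. -/
abbrev E2 (n : ℕ) := Matrix (Fin n × Fin n) (Fin n × Fin n) ℂ

/-- The graded permutation operator `P (e_c ⊗ e_d) = (-1)^{[c][d]} e_d ⊗ e_c`. -/
def Pm (M n : ℕ) : E2 n :=
  Matrix.of fun p q =>
    if p.1 = q.2 ∧ p.2 = q.1 then ((-1 : ℂ) ^ (gr M q.1 * gr M q.2)) else 0

/-- The R-matrix `R(u) = u·id - hb·P`. -/
def Rm (M n : ℕ) (hb u : ℂ) : E2 n := u • (1 : E2 n) - hb • Pm M n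

/-- The operator `Q (e_c ⊗ e_d) = δ_{cd} (-1)^{[d]} ∑_a e_a ⊗ e_a`. -/
def Qm (M n : ℕ) : E2 n :=
  Matrix.of fun p q => if q.1 = q.2 ∧ p.1 = p.2 then ((-1 : ℂ) ^ (gr M q.2)) else 0

/-- Graded partial transposition in the second tensor factor. -/
def pt2 (M n : ℕ) (X : E2 n) : E2 n :=
  Matrix.of fun p q =>
    ((-1 : ℂ) ^ (gr M p.2 * gr M q.2 + gr M q.2)) * X (p.1, q.2) (q.1, p.2)

/-- Graded transposition of an `n × n` matrix: `(Aᵗ)_{ij} = (-1)^{[i][j]+[j]} A_{ji}`. -/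
def gTr (M : ℕ) {n : ℕ} (A : Matrix (Fin n) (Fin n) ℂ) : Matrix (Fin n) (Fin n) ℂ :=
  Matrix.of fun i j => ((-1 : ℂ) ^ (gr M i * gr M j + gr M j)) * A j i

/-- `A ⊗ id` acting on `V ⊗ V`. -/
def m1 {n : ℕ} (A : Matrix (Fin n) (Fin n) ℂ) : E2 n :=
  Matrix.of fun p q => A p.1 q.1 * (if p.2 = q.2 then 1 else 0)

/-- `id ⊗ A` acting on `V ⊗ V`. -/
def m2 {n : ℕ} (A : Matrix (Fin n) (Fin n) ℂ) : E2 n :=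
  Matrix.of fun p q => (if p.1 = q.1 then 1 else 0) * A p.2 q.2

/-- `R₂₁(x) = P ∘ R(x) ∘ P`. -/
def R21 (M n : ℕ) (hb u : ℂ) : E2 n := Pm M n * Rm M n hb u * Pm M n

/-- The graded reflection equation for a matrix-valued function `K`. -/
def GRE (M n : ℕ) (hb : ℂ) (K : ℂ → Matrix (Fin n) (Fin n) ℂ) : Prop :=
  ∀ u v : ℂ,
    Rm M n hb (u - v) * m1 (K u) * R21 M n hb (u + v) * m2 (K v)
      = m2 (K v) * Rm M n hb (u + v) * m1 (K u) * R21 M n hb (u - v)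

/-- `End(V^{⊗m})`, with basis indexed by functions `Fin m → Fin n`. -/
abbrev Ten (n m : ℕ) := Matrix (Fin m → Fin n) (Fin m → Fin n) ℂ

/-- The Koszul embedding of `X ∈ End(V ⊗ V)` acting on the factors `i < j` of
`V^{⊗ m}` (identity on the other factors, with the graded crossing signs produced
by conjugation with the adjacent graded permutation operators). -/
def kEmb (M n m : ℕ) (i j : Fin m) (X : E2 n) : Ten n m :=
  Matrix.of fun f g =>
    (if ∀ l, l ≠ i → l ≠ j → f l = g l then (1 : ℂ) else 0)
      * X (f i, f j) (g i, g j)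
      * (-1 : ℂ) ^ ((gr M (f j) + gr M (g j)) *
          ∑ l ∈ Finset.univ.filter (fun l => i < l ∧ l < j), gr M (g l))

/-- The monodromy matrix `𝒯(u) = R_{1,2}(u-a₁) ⋯ R_{1,L+1}(u-a_L)` of the
inhomogeneous fundamental chain, acting on `V ⊗ H = V^{⊗(L+1)}` (auxiliary space
in position `0`). -/
def Tmono (M n L : ℕ) (hb : ℂ) (a : Fin L → ℂ) (u : ℂ) : Ten n (L + 1) :=
  (List.ofFn fun k : Fin L => kEmb M n (L + 1) 0 k.succ (Rm M n hb (u - a k))).prod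

/-- The block entry `X_{ab} ∈ End(H)` of an operator `X` on `V ⊗ H`. -/
def blk {n L : ℕ} (X : Ten n (L + 1)) (a b : Fin n) : Ten n L :=
  Matrix.of fun f g => X (Fin.cons a f) (Fin.cons b g)

/-- Supertrace transfer matrix `st(u) = ∑ (-1)^{[a]} 𝒯_{aa}(u)`. -/
def stm (M n L : ℕ) (hb : ℂ) (a : Fin L → ℂ) (u : ℂ) : Ten n L :=
  ∑ i : Fin n, ((-1 : ℂ) ^ gr M i) • blk (Tmono M n L hb a u) i i

/-- Trace transfer matrix `t(u) = ∑ 𝒯_{aa}(u)`. -/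
def tm (M n L : ℕ) (hb : ℂ) (a : Fin L → ℂ) (u : ℂ) : Ten n L :=
  ∑ i : Fin n, blk (Tmono M n L hb a u) i i

/-- The pseudovacuum `v⁺ = e₁ ⊗ ⋯ ⊗ e₁`. -/
def vplus (n L : ℕ) : (Fin L → Fin n) → ℂ :=
  fun f => if ∀ l, (f l : ℕ) = 0 then 1 else 0

/-- The pseudovacuum weights `λ_j(w)` (paper index `j ≥ 1`):
`λ₁(w) = ∏ (w - a_m - hb)`, `λ_j(w) = ∏ (w - a_m)` for `j ≥ 2`. -/
def lamP (L : ℕ) (hb : ℂ) (a : Fin L → ℂ) (j : ℕ) (w : ℂ) : ℂ :=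
  if j = 1 then ∏ m, (w - a m - hb) else ∏ m, (w - a m)

/-- `c_m = ∑_{l=1}^m (-1)^{[l]}` (so `c_0 = 0`). -/
def cP (M : ℕ) (m : ℕ) : ℂ := ∑ l ∈ Finset.range m, (if l < M then (1 : ℂ) else -1)

/-- `λ'_k(w) = ∏_{m=1}^{k-1} λ_m(w + hb c_m) / ∏_{m=1}^{k} λ_m(w + hb c_{m-1})`
(paper index `k ≥ 1`). -/
def lamPr (M L : ℕ) (hb : ℂ) (a : Fin L → ℂ) (k : ℕ) (w : ℂ) : ℂ :=
  (∏ m ∈ Finset.Icc 1 (k - 1), lamP L hb a m (w + hb * cP M m)) /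
    (∏ m ∈ Finset.Icc 1 k, lamP L hb a m (w + hb * cP M (m - 1)))

/-- The global generators `Δ(E_{ab}) = ∑_k E_{ab}^{(k)}` on `H = V^{⊗L}`. -/
def Delta (M n L : ℕ) (a b : Fin n) : Ten n L :=
  ∑ k : Fin L, Matrix.of fun f g =>
    if f k = a ∧ g k = b ∧ ∀ l, l ≠ k → f l = g l then
      (-1 : ℂ) ^ ((gr M a + gr M b) *
        ∑ l ∈ Finset.univ.filter (fun l => l < k), gr M (g l))
    else 0

/-- The diagonal entry (at paper index `j`, `1 ≤ j ≤ n`) of the diagonal boundary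
matrix with parameter `ξ` and blocks determined by `L₁ ≤ L₂`. -/
def kdval (ξ : ℂ) (L₁ L₂ : ℕ) (j : ℕ) (u : ℂ) : ℂ :=
  if L₁ < j ∧ j ≤ L₂ then u + ξ else ξ - u

/-- The diagonal boundary matrix `K(u)`. -/
def Kdiag (n : ℕ) (ξ : ℂ) (L₁ L₂ : ℕ) (u : ℂ) : Matrix (Fin n) (Fin n) ℂ :=
  Matrix.diagonal fun j => kdval ξ L₁ L₂ ((j : ℕ) + 1) u

/-- An `n × n` matrix acting on the auxiliary (first) factor of `V^{⊗(L+1)}`. -/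
def onAux {n L : ℕ} (A : Matrix (Fin n) (Fin n) ℂ) : Ten n (L + 1) :=
  Matrix.of fun f g => A (f 0) (g 0) * (if ∀ l, l ≠ 0 → f l = g l then 1 else 0)

/-- The double-row monodromy matrix `ℬ(u) = 𝒯(u) (K(u) ⊗ id_H) 𝒯(-u)⁻¹`. -/
def Bmono (M n L : ℕ) (hb : ℂ) (a : Fin L → ℂ) (ξ : ℂ) (L₁ L₂ : ℕ) (u : ℂ) :
    Ten n (L + 1) :=
  Tmono M n L hb a u * onAux (Kdiag n ξ L₁ L₂ u) * (Tmono M n L hb a (-u))⁻¹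

/-- The open-chain transfer matrix `b(u) = ∑ (-1)^{[a]} K⁺_{aa}(u) ℬ_{aa}(u)`. -/
def bop (M n L : ℕ) (hb : ℂ) (a : Fin L → ℂ) (ξ : ℂ) (L₁ L₂ : ℕ)
    (ξ' : ℂ) (L₁' L₂' : ℕ) (u : ℂ) : Ten n L :=
  ∑ i : Fin n,
    (((-1 : ℂ) ^ gr M i) * Kdiag n ξ' L₁' L₂' u i i) •
      blk (Bmono M n L hb a ξ L₁ L₂ u) i i

/-- The functions `g_k(u)` of the open-chain pseudovacuum (paper index `k ≥ 1`). -/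
def gP (M : ℕ) (hb ξ : ℂ) (L₁ L₂ : ℕ) (k : ℕ) (u : ℂ) : ℂ :=
  if k ≤ L₁ then ξ - u
  else if k ≤ L₂ then ξ + u - hb * cP M L₁
  else ξ - u - hb * (cP M L₁ - cP M L₂)

/-- The functions `a_k(u)` of the open-chain pseudovacuum (paper index `k ≥ 1`). -/
def aP (M L : ℕ) (hb : ℂ) (a : Fin L → ℂ) (k : ℕ) (u : ℂ) : ℂ :=
  (if k ≤ M then (1 : ℂ) else -1) * hb *
    (2 * u * lamP L hb a k u * lamPr M L hb a k (-u)) /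
    ((2 * u - hb * cP M k) * (2 * u - hb * cP M (k - 1)))

lemma neg_one_pow_eq {x y : ℕ} (h : x % 2 = y % 2) : (-1:ℂ)^x = (-1:ℂ)^y := by
  conv_lhs => rw [← Nat.div_add_mod x 2]
  conv_rhs => rw [← Nat.div_add_mod y 2]
  rw [pow_add, pow_add, pow_mul, pow_mul, h]
  norm_num

lemma gr01 (M : ℕ) {n : ℕ} (i : Fin n) : gr M i = 0 ∨ gr M i = 1 := by
  unfold gr; split <;> simp

def Dk (M n m : ℕ) (a b : Fin n) (k : Fin m) : Ten n m :=
  Matrix.of fun f g =>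
    if f k = a ∧ g k = b ∧ ∀ l, l ≠ k → f l = g l then
      (-1 : ℂ) ^ ((gr M a + gr M b) *
        ∑ l ∈ Finset.univ.filter (fun l => l < k), gr M (g l))
    else 0

lemma Delta_eq_sum (M n L : ℕ) (a b : Fin n) : Delta M n L a b = ∑ k, Dk M n L a b k := rfl

lemma sum_gr_off2 (M : ℕ) {m n : ℕ} (s : Finset (Fin m)) (f g : Fin m → Fin n)
    (p q : Fin m) (hpq : p ≠ q)
    (h : ∀ l ∈ s, l ≠ p → l ≠ q → f l = g l) :
    (∑ l ∈ s, gr M (f l)) + ((if p ∈ s then gr M (g p) else 0) + (if q ∈ s then gr M (g q) else 0))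
      = (∑ l ∈ s, gr M (g l)) + ((if p ∈ s then gr M (f p) else 0) + (if q ∈ s then gr M (f q) else 0)) := by
  rw [← Finset.sum_ite_eq' s p (fun l => gr M (g l)), ← Finset.sum_ite_eq' s q (fun l => gr M (g l)),
      ← Finset.sum_ite_eq' s p (fun l => gr M (f l)), ← Finset.sum_ite_eq' s q (fun l => gr M (f l)),
      ← Finset.sum_add_distrib, ← Finset.sum_add_distrib, ← Finset.sum_add_distrib,
      ← Finset.sum_add_distrib]
  refine Finset.sum_congr rfl fun l hl => ?_
  by_cases hp : l = p
  · subst hp; simp [hpq]; omega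
  · by_cases hq : l = q
    · subst hq; simp [Ne.symm hpq]; omega
    · simp [hp, hq, h l hl hp hq]

lemma sum_lt_split (M : ℕ) {m n : ℕ} (j : Fin (m+1)) (hj : j ≠ 0) (f : Fin (m+1) → Fin n) :
    ∑ l ∈ Finset.univ.filter (fun l => l < j), gr M (f l)
      = gr M (f 0) + ∑ l ∈ Finset.univ.filter (fun l => 0 < l ∧ l < j), gr M (f l) := by
  have hset : Finset.univ.filter (fun l : Fin (m+1) => l < j)
      = insert 0 (Finset.univ.filter (fun l => 0 < l ∧ l < j)) := by
    ext l
    simp only [Finset.mem_filter, Finset.mem_univ, true_and, Finset.mem_insert]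
    constructor
    · intro hl
      by_cases h0 : l = 0
      · exact Or.inl h0
      · exact Or.inr ⟨Fin.pos_iff_ne_zero.mpr h0, hl⟩
    · rintro (rfl | ⟨-, hl⟩)
      · exact Fin.pos_iff_ne_zero.mpr hj
      · exact hl
  rw [hset, Finset.sum_insert (by simp)]

lemma filter_lt_zero_empty {m : ℕ} :
    Finset.univ.filter (fun l : Fin (m+1) => l < 0) = ∅ :=
  Finset.filter_eq_empty_iff.mpr (fun l _ => Fin.not_lt_zero l)


def fsw {m n : ℕ} (j : Fin (m+1)) (f : Fin (m+1) → Fin n) : Fin (m+1) → Fin n :=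
  Function.update (Function.update f 0 (f j)) j (f 0)

lemma fsw_at0 {m n : ℕ} (j : Fin (m+1)) (hj : j ≠ 0) (f : Fin (m+1) → Fin n) :
    fsw j f 0 = f j := by
  unfold fsw
  rw [Function.update_of_ne (Ne.symm hj), Function.update_self]

lemma fsw_atj {m n : ℕ} (j : Fin (m+1)) (f : Fin (m+1) → Fin n) :
    fsw j f j = f 0 := Function.update_self _ _ _

lemma fsw_ne {m n : ℕ} (j : Fin (m+1)) (f : Fin (m+1) → Fin n) {l : Fin (m+1)}
    (hl0 : l ≠ 0) (hlj : l ≠ j) : fsw j f l = f l := by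
  unfold fsw
  rw [Function.update_of_ne hlj, Function.update_of_ne hl0]

lemma Dk_mul_apply (M n m : ℕ) (a b : Fin n) (k : Fin (m+1)) (X : Ten n (m+1))
    (f g : Fin (m+1) → Fin n) :
    (Dk M n (m+1) a b k * X) f g
      = Dk M n (m+1) a b k f (Function.update f k b) * X (Function.update f k b) g := by
  rw [Matrix.mul_apply]
  apply Finset.sum_eq_single
  · intro h _ hne
    have hz : Dk M n (m+1) a b k f h = 0 := by
      unfold Dk
      rw [Matrix.of_apply, if_neg]
      rintro ⟨-, h2, h3⟩
      apply hne
      funext l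
      by_cases hl : l = k
      · subst hl; rw [Function.update_self]; exact h2
      · rw [Function.update_of_ne hl]; exact (h3 l hl).symm
    rw [hz, zero_mul]
  · intro hmem; exact absurd (Finset.mem_univ _) hmem

lemma kP_mul_apply (M n m : ℕ) (j : Fin (m+1)) (hj : j ≠ 0) (X : Ten n (m+1))
    (f g : Fin (m+1) → Fin n) :
    (kEmb M n (m+1) 0 j (Pm M n) * X) f g
      = kEmb M n (m+1) 0 j (Pm M n) f (fsw j f) * X (fsw j f) g := by
  rw [Matrix.mul_apply]
  apply Finset.sum_eq_single
  · intro h _ hne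
    have hz : kEmb M n (m+1) 0 j (Pm M n) f h = 0 := by
      unfold kEmb Pm
      simp only [Matrix.of_apply]
      by_cases c1 : ∀ l, l ≠ 0 → l ≠ j → f l = h l
      · by_cases c2 : f 0 = h j ∧ f j = h 0
        · exfalso
          apply hne
          funext l
          by_cases hlj : l = j
          · subst hlj; rw [fsw_atj]; exact c2.1.symm
          · by_cases hl0 : l = 0
            · subst hl0; rw [fsw_at0 j hj]; exact c2.2.symm
            · rw [fsw_ne j f hl0 hlj]; exact (c1 l hl0 hlj).symm
        · rw [if_neg c2, mul_zero, zero_mul]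
      · rw [if_neg c1, zero_mul, zero_mul]
    rw [hz, zero_mul]
  · intro hmem; exact absurd (Finset.mem_univ _) hmem

lemma Dk_diag_val (M n m : ℕ) (a b : Fin n) (k : Fin (m+1)) (f : Fin (m+1) → Fin n) :
    Dk M n (m+1) a b k f (Function.update f k b)
      = if f k = a then
          (-1:ℂ) ^ ((gr M a + gr M b) * ∑ l ∈ Finset.univ.filter (fun l => l < k), gr M (f l))
        else 0 := by
  unfold Dk
  rw [Matrix.of_apply]
  have hs : ∑ l ∈ Finset.univ.filter (fun l => l < k), gr M (Function.update f k b l)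
      = ∑ l ∈ Finset.univ.filter (fun l => l < k), gr M (f l) :=
    Finset.sum_congr rfl fun l hl => by
      rw [Function.update_of_ne (ne_of_lt (Finset.mem_filter.mp hl).2)]
  rw [hs]
  exact if_congr ⟨fun h => h.1,
    fun h => ⟨h, Function.update_self _ _ _, fun l hl => (Function.update_of_ne hl _ _).symm⟩⟩ rfl rfl

lemma kP_fsw_val (M n m : ℕ) (j : Fin (m+1)) (hj : j ≠ 0) (f : Fin (m+1) → Fin n) :
    kEmb M n (m+1) 0 j (Pm M n) f (fsw j f)
      = (-1:ℂ) ^ (gr M (f j) * gr M (f 0)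
          + (gr M (f j) + gr M (f 0)) *
            ∑ l ∈ Finset.univ.filter (fun l => 0 < l ∧ l < j), gr M (f l)) := by
  unfold kEmb Pm
  simp only [Matrix.of_apply]
  rw [if_pos (fun l hl0 hlj => (fsw_ne j f hl0 hlj).symm),
      if_pos ⟨(fsw_atj j f).symm, (fsw_at0 j hj f).symm⟩, one_mul]
  have h0 : fsw j f 0 = f j := fsw_at0 j hj f
  have hjv : fsw j f j = f 0 := fsw_atj j f
  have hs : ∑ l ∈ Finset.univ.filter (fun l : Fin (m+1) => 0 < l ∧ l < j), gr M (fsw j f l)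
      = ∑ l ∈ Finset.univ.filter (fun l => 0 < l ∧ l < j), gr M (f l) :=
    Finset.sum_congr rfl fun l hl => by
      obtain ⟨hl0, hlj⟩ := (Finset.mem_filter.mp hl).2
      rw [fsw_ne j f (Fin.pos_iff_ne_zero.mp hl0) (ne_of_lt hlj)]
  rw [h0, hjv, hs, ← pow_add]


lemma Dk_comm_kP (M n m : ℕ) (a b : Fin n) (j : Fin (m+1)) (hj : j ≠ 0) (k : Fin (m+1)) :
    Dk M n (m+1) a b k * kEmb M n (m+1) 0 j (Pm M n)
      = kEmb M n (m+1) 0 j (Pm M n) * Dk M n (m+1) a b (Equiv.swap 0 j k) := by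
  ext f g
  rw [Dk_mul_apply, Dk_diag_val, kP_mul_apply M n m j hj, kP_fsw_val M n m j hj]
  by_cases hk0 : k = 0
  ·
    subst hk0
    rw [Equiv.swap_apply_left]
    unfold kEmb Pm Dk
    simp only [Matrix.of_apply]
    by_cases hD : f 0 = a ∧ g j = b ∧ f j = g 0 ∧ ∀ l, l ≠ 0 → l ≠ j → f l = g l
    · obtain ⟨hfa, hgj, hj0, hrest⟩ := hD
      have c1 : ∀ l, l ≠ 0 → l ≠ j → Function.update f 0 b l = g l := by
        intro l hl0 hlj; rw [Function.update_of_ne hl0]; exact hrest l hl0 hlj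
      have c2a : Function.update f 0 b 0 = g j := by
        rw [Function.update_self]; exact hgj.symm
      have c2b : Function.update f 0 b j = g 0 := by
        rw [Function.update_of_ne hj]; exact hj0
      have c4 : fsw j f j = a ∧ g j = b ∧ ∀ l, l ≠ j → fsw j f l = g l := by
        refine ⟨by rw [fsw_atj]; exact hfa, hgj, fun l hlj => ?_⟩
        by_cases hl0 : l = 0
        · subst hl0; rw [fsw_at0 j hj]; exact hj0
        · rw [fsw_ne j f hl0 hlj]; exact hrest l hl0 hlj
      rw [if_pos hfa, if_pos c1, if_pos ⟨c2a, c2b⟩, if_pos c4]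
      rw [filter_lt_zero_empty, Finset.sum_empty, Function.update_of_ne hj,
        sum_lt_split M j hj g]
      have hT : ∑ l ∈ Finset.univ.filter (fun l : Fin (m+1) => 0 < l ∧ l < j), gr M (g l)
          = ∑ l ∈ Finset.univ.filter (fun l : Fin (m+1) => 0 < l ∧ l < j), gr M (f l) :=
        Finset.sum_congr rfl fun l hl => by
          obtain ⟨hl0, hlj⟩ := (Finset.mem_filter.mp hl).2
          rw [← hrest l (Fin.pos_iff_ne_zero.mp hl0) (ne_of_lt hlj)]
      rw [show g 0 = f j from hj0.symm, show g j = b from hgj, show f 0 = a from hfa, hT]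
      rw [one_mul, ← pow_add, ← pow_add, ← pow_add]
      apply neg_one_pow_eq
      rcases gr01 M a with hA|hA <;> rcases gr01 M b with hB|hB <;>
        rcases gr01 M (f j) with h2|h2 <;>
        simp only [hA, hB, h2] at * <;> omega
    · have hC4 : ¬(fsw j f j = a ∧ g j = b ∧ ∀ l, l ≠ j → fsw j f l = g l) := by
        rintro ⟨x1, x2, x3⟩
        rw [fsw_atj] at x1
        refine hD ⟨x1, x2, ?_, ?_⟩
        · have := x3 0 (Ne.symm hj); rwa [fsw_at0 j hj] at this
        · intro l hl0 hlj
          have := x3 l hlj; rwa [fsw_ne j f hl0 hlj] at this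
      rw [if_neg hC4, mul_zero]
      by_cases cA : f 0 = a
      · by_cases cB : ∀ l, l ≠ 0 → l ≠ j → Function.update f 0 b l = g l
        · by_cases cC : Function.update f 0 b 0 = g j ∧ Function.update f 0 b j = g 0
          · exfalso
            apply hD
            refine ⟨cA, ?_, ?_, ?_⟩
            · have := cC.1; rw [Function.update_self] at this; exact this.symm
            · have := cC.2; rwa [Function.update_of_ne hj] at this
            · intro l hl0 hlj
              have := cB l hl0 hlj; rwa [Function.update_of_ne hl0] at this
          · rw [if_neg cC, mul_zero, zero_mul, mul_zero]
        · rw [if_neg cB, zero_mul, zero_mul, mul_zero]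
      · rw [if_neg cA, zero_mul]
  · by_cases hkj : k = j
    · subst hkj
      rw [Equiv.swap_apply_right]
      unfold kEmb Pm Dk
      simp only [Matrix.of_apply]
      by_cases hD : f k = a ∧ g 0 = b ∧ f 0 = g k ∧ ∀ l, l ≠ 0 → l ≠ k → f l = g l
      · obtain ⟨hfa, hg0, h0j, hrest⟩ := hD
        have c1 : ∀ l, l ≠ 0 → l ≠ k → Function.update f k b l = g l := by
          intro l hl0 hlj; rw [Function.update_of_ne hlj]; exact hrest l hl0 hlj
        have c2a : Function.update f k b 0 = g k := by
          rw [Function.update_of_ne (Ne.symm hj)]; exact h0j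
        have c2b : Function.update f k b k = g 0 := by
          rw [Function.update_self]; exact hg0.symm
        have c4 : fsw k f 0 = a ∧ g 0 = b ∧ ∀ l, l ≠ 0 → fsw k f l = g l := by
          refine ⟨by rw [fsw_at0 k hj]; exact hfa, hg0, fun l hl0 => ?_⟩
          by_cases hlj : l = k
          · subst hlj; rw [fsw_atj]; exact h0j
          · rw [fsw_ne k f hl0 hlj]; exact hrest l hl0 hlj
        rw [if_pos hfa, if_pos c1, if_pos ⟨c2a, c2b⟩, if_pos c4]
        rw [filter_lt_zero_empty, Finset.sum_empty,
          show Function.update f k b k = b from Function.update_self _ _ _,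
          sum_lt_split M k hj f]
        have hT : ∑ l ∈ Finset.univ.filter (fun l : Fin (m+1) => 0 < l ∧ l < k), gr M (g l)
            = ∑ l ∈ Finset.univ.filter (fun l : Fin (m+1) => 0 < l ∧ l < k), gr M (f l) :=
          Finset.sum_congr rfl fun l hl => by
            obtain ⟨hl0, hlj⟩ := (Finset.mem_filter.mp hl).2
            rw [← hrest l (Fin.pos_iff_ne_zero.mp hl0) (ne_of_lt hlj)]
        rw [show g 0 = b from hg0, show g k = f 0 from h0j.symm, show f k = a from hfa, hT]
        rw [one_mul, ← pow_add, ← pow_add, ← pow_add]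
        apply neg_one_pow_eq
        rcases gr01 M a with hA|hA <;> rcases gr01 M b with hB|hB <;>
          rcases gr01 M (f 0) with h1|h1 <;>
          simp only [hA, hB, h1] at * <;> omega
      · have hC4 : ¬(fsw k f 0 = a ∧ g 0 = b ∧ ∀ l, l ≠ 0 → fsw k f l = g l) := by
          rintro ⟨x1, x2, x3⟩
          rw [fsw_at0 k hj] at x1
          refine hD ⟨x1, x2, ?_, ?_⟩
          · have := x3 k hj; rwa [fsw_atj] at this
          · intro l hl0 hlj
            have := x3 l hl0; rwa [fsw_ne k f hl0 hlj] at this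
        rw [if_neg hC4, mul_zero]
        by_cases cA : f k = a
        · by_cases cB : ∀ l, l ≠ 0 → l ≠ k → Function.update f k b l = g l
          · by_cases cC : Function.update f k b 0 = g k ∧ Function.update f k b k = g 0
            · exfalso
              apply hD
              refine ⟨cA, ?_, ?_, ?_⟩
              · have := cC.2; rw [Function.update_self] at this; exact this.symm
              · have := cC.1; rwa [Function.update_of_ne (Ne.symm hj)] at this
              · intro l hl0 hlj
                have := cB l hl0 hlj; rwa [Function.update_of_ne hlj] at this
            · rw [if_neg cC, mul_zero, zero_mul, mul_zero]
          · rw [if_neg cB, zero_mul, zero_mul, mul_zero]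
        · rw [if_neg cA, zero_mul]
    · -- generic case
      rw [Equiv.swap_apply_of_ne_of_ne hk0 hkj]
      unfold kEmb Pm Dk
      simp only [Matrix.of_apply]
      by_cases hD : f k = a ∧ g k = b ∧ f 0 = g j ∧ f j = g 0 ∧
          ∀ l, l ≠ 0 → l ≠ j → l ≠ k → f l = g l
      · obtain ⟨hfa, hgk, h0j, hj0, hrest⟩ := hD
        have c1 : ∀ l, l ≠ 0 → l ≠ j → Function.update f k b l = g l := by
          intro l hl0 hlj
          by_cases hlk : l = k
          · subst hlk; rw [Function.update_self]; exact hgk.symm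
          · rw [Function.update_of_ne hlk]; exact hrest l hl0 hlj hlk
        have c2a : Function.update f k b 0 = g j := by
          rw [Function.update_of_ne (Ne.symm hk0)]; exact h0j
        have c2b : Function.update f k b j = g 0 := by
          rw [Function.update_of_ne (Ne.symm hkj)]; exact hj0
        have c4 : fsw j f k = a ∧ g k = b ∧ ∀ l, l ≠ k → fsw j f l = g l := by
          refine ⟨by rw [fsw_ne j f hk0 hkj]; exact hfa, hgk, fun l hlk => ?_⟩
          by_cases hlj : l = j
          · subst hlj; rw [fsw_atj]; exact h0j
          · by_cases hl0 : l = 0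
            · subst hl0; rw [fsw_at0 j hj]; exact hj0
            · rw [fsw_ne j f hl0 hlj]; exact hrest l hl0 hlj hlk
        rw [if_pos hfa, if_pos c1, if_pos ⟨c2a, c2b⟩, if_pos c4]
        rw [Function.update_of_ne (Ne.symm hkj)]
        rw [show g 0 = f j from hj0.symm, show g j = f 0 from h0j.symm]
        rw [one_mul, ← pow_add, ← pow_add, ← pow_add]
        apply neg_one_pow_eq
        -- sum relations
        have hjΦ : j ∉ Finset.univ.filter (fun l : Fin (m+1) => 0 < l ∧ l < j) := by
          simp [Finset.mem_filter]
        have h0Ψ : (0 : Fin (m+1)) ∈ Finset.univ.filter (fun l : Fin (m+1) => l < k) := by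
          simp [Finset.mem_filter, Fin.pos_iff_ne_zero.mpr hk0]
        by_cases hkj2 : k < j
        · have hT := sum_gr_off2 M (Finset.univ.filter (fun l : Fin (m+1) => 0 < l ∧ l < j))
            f g k j hkj (fun l hl hlk hlj =>
              hrest l (Fin.pos_iff_ne_zero.mp (Finset.mem_filter.mp hl).2.1) hlj hlk)
          rw [if_pos (Finset.mem_filter.mpr ⟨Finset.mem_univ _,
              ⟨Fin.pos_iff_ne_zero.mpr hk0, hkj2⟩⟩), if_neg hjΦ,
            if_pos (Finset.mem_filter.mpr ⟨Finset.mem_univ _,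
              ⟨Fin.pos_iff_ne_zero.mpr hk0, hkj2⟩⟩), if_neg hjΦ, hgk, hfa] at hT
          have hjΨ : j ∉ Finset.univ.filter (fun l : Fin (m+1) => l < k) := by
            simp only [Finset.mem_filter, Finset.mem_univ, true_and]
            exact fun h => absurd (h.trans hkj2) (lt_irrefl j)
          have hS := sum_gr_off2 M (Finset.univ.filter (fun l : Fin (m+1) => l < k))
            f g 0 j (Ne.symm hj) (fun l hl hl0 hlj =>
              hrest l hl0 hlj (ne_of_lt (Finset.mem_filter.mp hl).2))
          rw [if_pos h0Ψ, if_neg hjΨ, if_pos h0Ψ, if_neg hjΨ,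
            show g 0 = f j from hj0.symm] at hS
          rcases gr01 M a with hA|hA <;> rcases gr01 M b with hB|hB <;>
            rcases gr01 M (f 0) with h1|h1 <;> rcases gr01 M (f j) with h2|h2 <;>
            simp only [hA, hB, h1, h2] at hT hS ⊢ <;> omega
        · have hjk : j < k := (lt_or_gt_of_ne hkj).resolve_left hkj2
          have hkΦ : k ∉ Finset.univ.filter (fun l : Fin (m+1) => 0 < l ∧ l < j) := by
            simp only [Finset.mem_filter, Finset.mem_univ, true_and, not_and]
            exact fun _ => hkj2
          have hT := sum_gr_off2 M (Finset.univ.filter (fun l : Fin (m+1) => 0 < l ∧ l < j))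
            f g k j hkj (fun l hl hlk hlj =>
              hrest l (Fin.pos_iff_ne_zero.mp (Finset.mem_filter.mp hl).2.1) hlj hlk)
          rw [if_neg hkΦ, if_neg hjΦ, if_neg hkΦ, if_neg hjΦ] at hT
          have hjΨ : j ∈ Finset.univ.filter (fun l : Fin (m+1) => l < k) := by
            simp only [Finset.mem_filter, Finset.mem_univ, true_and]; exact hjk
          have hS := sum_gr_off2 M (Finset.univ.filter (fun l : Fin (m+1) => l < k))
            f g 0 j (Ne.symm hj) (fun l hl hl0 hlj =>
              hrest l hl0 hlj (ne_of_lt (Finset.mem_filter.mp hl).2))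
          rw [if_pos h0Ψ, if_pos hjΨ, if_pos h0Ψ, if_pos hjΨ,
            show g 0 = f j from hj0.symm, show g j = f 0 from h0j.symm] at hS
          rcases gr01 M a with hA|hA <;> rcases gr01 M b with hB|hB <;>
            rcases gr01 M (f 0) with h1|h1 <;> rcases gr01 M (f j) with h2|h2 <;>
            simp only [hA, hB, h1, h2] at hT hS ⊢ <;> omega
      · have hC4 : ¬(fsw j f k = a ∧ g k = b ∧ ∀ l, l ≠ k → fsw j f l = g l) := by
          rintro ⟨x1, x2, x3⟩
          refine hD ⟨by rw [← fsw_ne j f hk0 hkj]; exact x1, x2, ?_, ?_, ?_⟩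
          · have := x3 j (Ne.symm hkj); rwa [fsw_atj] at this
          · have := x3 0 (Ne.symm hk0); rwa [fsw_at0 j hj] at this
          · intro l hl0 hlj hlk
            have := x3 l hlk; rwa [fsw_ne j f hl0 hlj] at this
        rw [if_neg hC4, mul_zero]
        by_cases cA : f k = a
        · by_cases cB : ∀ l, l ≠ 0 → l ≠ j → Function.update f k b l = g l
          · by_cases cC : Function.update f k b 0 = g j ∧ Function.update f k b j = g 0
            · exfalso
              apply hD
              refine ⟨cA, ?_, ?_, ?_, ?_⟩
              · have := cB k hk0 hkj; rw [Function.update_self] at this; exact this.symm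
              · have := cC.1; rwa [Function.update_of_ne (Ne.symm hk0)] at this
              · have := cC.2; rwa [Function.update_of_ne (Ne.symm hkj)] at this
              · intro l hl0 hlj hlk
                have := cB l hl0 hlj; rwa [Function.update_of_ne hlk] at this
            · rw [if_neg cC, mul_zero, zero_mul, mul_zero]
          · rw [if_neg cB, zero_mul, zero_mul, mul_zero]
        · rw [if_neg cA, zero_mul]





lemma Delta_comm_kP (M n m : ℕ) (a b : Fin n) (j : Fin (m+1)) (hj : j ≠ 0) :
    Delta M n (m+1) a b * kEmb M n (m+1) 0 j (Pm M n)
      = kEmb M n (m+1) 0 j (Pm M n) * Delta M n (m+1) a b := by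
  rw [Delta_eq_sum, Finset.sum_mul, Finset.mul_sum]
  conv_rhs => rw [← Equiv.sum_comp (Equiv.swap (0 : Fin (m+1)) j)
    (fun k => kEmb M n (m+1) 0 j (Pm M n) * Dk M n (m+1) a b k)]
  exact Finset.sum_congr rfl fun k _ => Dk_comm_kP M n m a b j hj k

lemma kEmb_one (M n m : ℕ) (j : Fin (m+1)) :
    kEmb M n (m+1) 0 j (1 : E2 n) = 1 := by
  ext f g
  unfold kEmb
  rw [Matrix.of_apply]
  by_cases h : f = g
  · subst h
    rw [if_pos (fun l _ _ => rfl),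
      show (1 : E2 n) (f 0, f j) (f 0, f j) = 1 from Matrix.one_apply_eq _, one_mul, one_mul,
      Even.neg_one_pow ⟨gr M (f j) * ∑ l ∈ Finset.univ.filter
        (fun l : Fin (m+1) => 0 < l ∧ l < j), gr M (f l), by ring⟩]
    exact (Matrix.one_apply_eq _).symm
  · rw [Matrix.one_apply_ne h]
    by_cases c1 : ∀ l, l ≠ 0 → l ≠ j → f l = g l
    · by_cases c2 : (f 0, f j) = (g 0, g j)
      · exfalso
        apply h
        funext l
        by_cases hl0 : l = 0
        · subst hl0; exact congrArg Prod.fst c2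
        · by_cases hlj : l = j
          · subst hlj; exact congrArg Prod.snd c2
          · exact c1 l hl0 hlj
      · rw [Matrix.one_apply_ne c2, mul_zero, zero_mul]
    · rw [if_neg c1, zero_mul, zero_mul]

lemma kEmb_Rm (M n m : ℕ) (j : Fin (m+1)) (hb u : ℂ) :
    kEmb M n (m+1) 0 j (Rm M n hb u)
      = u • (1 : Ten n (m+1)) - hb • kEmb M n (m+1) 0 j (Pm M n) := by
  rw [← kEmb_one M n m j]
  ext f g
  unfold kEmb Rm
  simp only [Matrix.of_apply, Matrix.sub_apply, Matrix.smul_apply, smul_eq_mul]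
  ring

lemma Delta_comm_Tmono (M n L : ℕ) (a b : Fin n) (hb : ℂ) (sh : Fin L → ℂ) (u : ℂ) :
    Delta M n (L+1) a b * Tmono M n L hb sh u = Tmono M n L hb sh u * Delta M n (L+1) a b := by
  have : Commute (Delta M n (L+1) a b) (Tmono M n L hb sh u) := by
    apply Commute.list_prod_right
    intro x hx
    simp only [List.mem_ofFn] at hx
    obtain ⟨k, rfl⟩ := hx
    rw [kEmb_Rm M n L k.succ hb (u - sh k)]
    exact Commute.sub_right (Commute.smul_right (Commute.one_right _) _)
      (Commute.smul_right (Delta_comm_kP M n L a b k.succ (Fin.succ_ne_zero k)) _)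
  exact this

lemma blk_mul {n L : ℕ} (X Y : Ten n (L+1)) (i j : Fin n) :
    blk (X * Y) i j = ∑ c : Fin n, blk X i c * blk Y c j := by
  ext f g
  simp only [blk, Matrix.of_apply, Matrix.mul_apply, Matrix.sum_apply]
  rw [← (Fintype.sum_equiv (Fin.consEquiv fun _ : Fin (L+1) => Fin n)
    (fun p : Fin n × (Fin L → Fin n) => X (Fin.cons i f) (Fin.cons p.1 p.2)
      * Y (Fin.cons p.1 p.2) (Fin.cons j g))
    (fun h => X (Fin.cons i f) h * Y h (Fin.cons j g)) (fun p => rfl)),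
    Fintype.sum_prod_type]

lemma sum_cons_lt (M n L : ℕ) (c : Fin n) (g : Fin L → Fin n) (k : Fin L) :
    ∑ l ∈ Finset.univ.filter (fun l : Fin (L+1) => l < k.succ), gr M ((Fin.cons c g : Fin (L+1) → Fin n) l)
      = gr M c + ∑ l ∈ Finset.univ.filter (fun l : Fin L => l < k), gr M (g l) := by
  rw [Finset.sum_filter, Fin.sum_univ_succ, Finset.sum_filter]
  simp only [Fin.cons_zero, Fin.cons_succ, Fin.succ_lt_succ_iff]
  rw [if_pos (Fin.succ_pos k)]

lemma blk_Delta (M n L : ℕ) (a b i c : Fin n) :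
    blk (Delta M n (L+1) a b) i c
      = (if i = a ∧ c = b then (1 : Ten n L) else 0)
        + (if i = c then ((-1:ℂ)^((gr M a + gr M b) * gr M c)) • Delta M n L a b else 0) := by
  ext f g
  rw [Matrix.add_apply]
  have e0 : (if i = a ∧ c = b then (1 : Ten n L) else 0) f g
      = if i = a ∧ c = b ∧ f = g then 1 else 0 := by
    by_cases h : i = a ∧ c = b
    · rw [if_pos h, Matrix.one_apply]
      by_cases hfg : f = g
      · rw [if_pos hfg, if_pos ⟨h.1, h.2, hfg⟩]
      · rw [if_neg hfg, if_neg (fun hh => hfg hh.2.2)]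
    · rw [if_neg h, if_neg (fun hh => h ⟨hh.1, hh.2.1⟩), Matrix.zero_apply]
  have e1 : (if i = c then ((-1:ℂ)^((gr M a + gr M b) * gr M c)) • Delta M n L a b else 0) f g
      = if i = c then ((-1:ℂ)^((gr M a + gr M b) * gr M c)) * Delta M n L a b f g else 0 := by
    by_cases h : i = c
    · rw [if_pos h, if_pos h, Matrix.smul_apply, smul_eq_mul]
    · rw [if_neg h, if_neg h, Matrix.zero_apply]
  rw [e0, e1]
  show Delta M n (L+1) a b (Fin.cons i f) (Fin.cons c g) = _
  unfold Delta
  rw [Matrix.sum_apply, Fin.sum_univ_succ]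
  simp only [Matrix.of_apply]
  congr 1
  · rw [filter_lt_zero_empty, Finset.sum_empty, Nat.mul_zero, pow_zero]
    apply if_congr _ rfl rfl
    simp only [Fin.cons_zero]
    constructor
    · rintro ⟨h1, h2, h3⟩
      refine ⟨h1, h2, funext fun l => ?_⟩
      have := h3 l.succ (Fin.succ_ne_zero l)
      simpa [Fin.cons_succ] using this
    · rintro ⟨h1, h2, h3⟩
      subst h3
      refine ⟨h1, h2, fun l hl => ?_⟩
      rcases Fin.eq_zero_or_eq_succ l with rfl | ⟨l', rfl⟩
      · exact absurd rfl hl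
      · simp [Fin.cons_succ]
  · by_cases hic : i = c
    · subst hic
      rw [if_pos rfl, Matrix.sum_apply, Finset.mul_sum]
      apply Finset.sum_congr rfl
      intro k _
      simp only [Matrix.of_apply]
      rw [sum_cons_lt M n L i g k, Nat.mul_add, pow_add]
      by_cases hQ : f k = a ∧ g k = b ∧ ∀ l, l ≠ k → f l = g l
      · rw [if_pos hQ, if_pos ?_]
        refine ⟨by simp [Fin.cons_succ, hQ.1], by simp [Fin.cons_succ, hQ.2.1],
          fun l hl => ?_⟩
        rcases Fin.eq_zero_or_eq_succ l with rfl | ⟨l', rfl⟩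
        · simp [Fin.cons_zero]
        · simp only [Fin.cons_succ]
          exact hQ.2.2 l' (fun h => hl (congrArg Fin.succ h))
      · rw [if_neg hQ, mul_zero, if_neg ?_]
        rintro ⟨p1, p2, p3⟩
        refine hQ ⟨by simpa [Fin.cons_succ] using p1, by simpa [Fin.cons_succ] using p2,
          fun l hl => ?_⟩
        have := p3 l.succ (fun hh => hl (Fin.succ_inj.mp hh))
        simpa [Fin.cons_succ] using this
    · rw [if_neg hic]
      apply Finset.sum_eq_zero
      intro k _
      rw [if_neg]
      rintro ⟨-, -, h3⟩
      exact hic (by simpa [Fin.cons_zero] using h3 0 (Fin.succ_ne_zero k).symm)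

lemma final_assembly (M n L : ℕ) (a b : Fin n) (hb : ℂ) (sh : Fin L → ℂ) (u : ℂ) :
    Delta M n L a b * stm M n L hb sh u = stm M n L hb sh u * Delta M n L a b := by
  classical
  set T : Ten n (L+1) := Tmono M n L hb sh u with hTdef
  set D : Ten n L := Delta M n L a b with hDdef
  have hcomm : Delta M n (L+1) a b * T = T * Delta M n (L+1) a b :=
    Delta_comm_Tmono M n L a b hb sh u
  have hL : ∀ i : Fin n, ∑ c : Fin n, blk (Delta M n (L+1) a b) i c * blk T c i
      = (if i = a then blk T b i else 0)
        + ((-1:ℂ)^((gr M a + gr M b) * gr M i)) • (D * blk T i i) := by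
    intro i
    have hpt : ∀ c : Fin n, blk (Delta M n (L+1) a b) i c * blk T c i
        = (if c = b then (if i = a then blk T b i else 0) else 0)
          + (if c = i then ((-1:ℂ)^((gr M a + gr M b) * gr M i)) • (D * blk T i i) else 0) := by
      intro c
      rw [blk_Delta, add_mul, hDdef]
      congr 1
      · by_cases h1 : c = b <;> by_cases h2 : i = a <;> simp [h1, h2]
      · by_cases h : c = i
        · subst h
          rw [if_pos rfl, if_pos rfl, smul_mul_assoc]
        · rw [if_neg (fun hh => h hh.symm), if_neg h, zero_mul]
    rw [Finset.sum_congr rfl (fun c _ => hpt c), Finset.sum_add_distrib,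
      Finset.sum_ite_eq' Finset.univ b (fun _ => if i = a then blk T b i else 0),
      Finset.sum_ite_eq' Finset.univ i
        (fun _ => ((-1:ℂ)^((gr M a + gr M b) * gr M i)) • (D * blk T i i))]
    simp only [Finset.mem_univ, if_true]
  have hR : ∀ i : Fin n, ∑ c : Fin n, blk T i c * blk (Delta M n (L+1) a b) c i
      = (if i = b then blk T i a else 0)
        + ((-1:ℂ)^((gr M a + gr M b) * gr M i)) • (blk T i i * D) := by
    intro i
    have hpt : ∀ c : Fin n, blk T i c * blk (Delta M n (L+1) a b) c i
        = (if c = a then (if i = b then blk T i a else 0) else 0)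
          + (if c = i then ((-1:ℂ)^((gr M a + gr M b) * gr M i)) • (blk T i i * D) else 0) := by
      intro c
      rw [blk_Delta, mul_add, hDdef]
      congr 1
      · by_cases h1 : c = a <;> by_cases h2 : i = b <;> simp [h1, h2]
      · by_cases h : c = i
        · subst h
          rw [if_pos rfl, if_pos rfl, mul_smul_comm]
        · rw [if_neg h, if_neg h, mul_zero]
    rw [Finset.sum_congr rfl (fun c _ => hpt c), Finset.sum_add_distrib,
      Finset.sum_ite_eq' Finset.univ a (fun _ => if i = b then blk T i a else 0),
      Finset.sum_ite_eq' Finset.univ i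
        (fun _ => ((-1:ℂ)^((gr M a + gr M b) * gr M i)) • (blk T i i * D))]
    simp only [Finset.mem_univ, if_true]
  have key : ∀ i : Fin n,
      (if i = a then blk T b i else 0)
        + ((-1:ℂ)^((gr M a + gr M b) * gr M i)) • (D * blk T i i)
      = (if i = b then blk T i a else 0)
        + ((-1:ℂ)^((gr M a + gr M b) * gr M i)) • (blk T i i * D) := by
    intro i
    have h1 := congrArg (fun X : Ten n (L+1) => blk X i i) hcomm
    rw [blk_mul, blk_mul] at h1
    exact (hL i).symm.trans (h1.trans (hR i))
  have total := Finset.sum_congr rfl (fun i (_ : i ∈ (Finset.univ : Finset (Fin n))) =>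
    congrArg (fun X : Ten n L => ((-1:ℂ)^(gr M i * (1 + gr M a + gr M b))) • X) (key i))
  simp only [smul_add, smul_smul] at total
  rw [Finset.sum_add_distrib, Finset.sum_add_distrib] at total
  have wε : ∀ i : Fin n,
      (-1:ℂ)^(gr M i * (1 + gr M a + gr M b)) * (-1:ℂ)^((gr M a + gr M b) * gr M i)
        = (-1:ℂ)^(gr M i) := by
    intro i
    rw [← pow_add]
    apply neg_one_pow_eq
    rcases gr01 M i with h|h <;> rcases gr01 M a with h2|h2 <;> rcases gr01 M b with h3|h3 <;>
      simp only [h, h2, h3] <;> omega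
  have s1 : ∑ i : Fin n, ((-1:ℂ)^(gr M i * (1 + gr M a + gr M b))) • (if i = a then blk T b i else 0)
      = ((-1:ℂ)^(gr M a * (1 + gr M a + gr M b))) • blk T b a := by
    have hp : ∀ i : Fin n, ((-1:ℂ)^(gr M i * (1 + gr M a + gr M b))) • (if i = a then blk T b i else 0)
        = if i = a then ((-1:ℂ)^(gr M a * (1 + gr M a + gr M b))) • blk T b a else 0 := by
      intro i
      by_cases h : i = a
      · subst h; rw [if_pos rfl, if_pos rfl]
      · rw [if_neg h, if_neg h, smul_zero]
    rw [Finset.sum_congr rfl (fun i _ => hp i), Finset.sum_ite_eq' Finset.univ a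
      (fun _ => ((-1:ℂ)^(gr M a * (1 + gr M a + gr M b))) • blk T b a)]
    simp only [Finset.mem_univ, if_true]
  have s2 : ∑ i : Fin n, ((-1:ℂ)^(gr M i * (1 + gr M a + gr M b))) • (if i = b then blk T i a else 0)
      = ((-1:ℂ)^(gr M b * (1 + gr M a + gr M b))) • blk T b a := by
    have hp : ∀ i : Fin n, ((-1:ℂ)^(gr M i * (1 + gr M a + gr M b))) • (if i = b then blk T i a else 0)
        = if i = b then ((-1:ℂ)^(gr M b * (1 + gr M a + gr M b))) • blk T b a else 0 := by
      intro i
      by_cases h : i = b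
      · subst h; rw [if_pos rfl, if_pos rfl]
      · rw [if_neg h, if_neg h, smul_zero]
    rw [Finset.sum_congr rfl (fun i _ => hp i), Finset.sum_ite_eq' Finset.univ b
      (fun _ => ((-1:ℂ)^(gr M b * (1 + gr M a + gr M b))) • blk T b a)]
    simp only [Finset.mem_univ, if_true]
  have s3 : ∑ i : Fin n, ((-1:ℂ)^(gr M i * (1 + gr M a + gr M b)) * (-1:ℂ)^((gr M a + gr M b) * gr M i)) • (D * blk T i i)
      = D * stm M n L hb sh u := by
    calc ∑ i : Fin n, ((-1:ℂ)^(gr M i * (1 + gr M a + gr M b)) * (-1:ℂ)^((gr M a + gr M b) * gr M i)) • (D * blk T i i)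
        = ∑ i : Fin n, D * (((-1:ℂ)^(gr M i)) • blk T i i) :=
          Finset.sum_congr rfl (fun i _ => by rw [wε i, mul_smul_comm])
      _ = D * ∑ i : Fin n, ((-1:ℂ)^(gr M i)) • blk T i i := (Finset.mul_sum _ _ _).symm
      _ = D * stm M n L hb sh u := by rw [hTdef]; rfl
  have s4 : ∑ i : Fin n, ((-1:ℂ)^(gr M i * (1 + gr M a + gr M b)) * (-1:ℂ)^((gr M a + gr M b) * gr M i)) • (blk T i i * D)
      = stm M n L hb sh u * D := by
    calc ∑ i : Fin n, ((-1:ℂ)^(gr M i * (1 + gr M a + gr M b)) * (-1:ℂ)^((gr M a + gr M b) * gr M i)) • (blk T i i * D)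
        = ∑ i : Fin n, (((-1:ℂ)^(gr M i)) • blk T i i) * D :=
          Finset.sum_congr rfl (fun i _ => by rw [wε i, smul_mul_assoc])
      _ = (∑ i : Fin n, ((-1:ℂ)^(gr M i)) • blk T i i) * D := (Finset.sum_mul _ _ _).symm
      _ = stm M n L hb sh u * D := by rw [hTdef]; rfl
  rw [s1, s2, s3, s4] at total
  have wab : ((-1:ℂ)^(gr M a * (1 + gr M a + gr M b))) = ((-1:ℂ)^(gr M b * (1 + gr M a + gr M b))) := by
    apply neg_one_pow_eq
    rcases gr01 M a with h2|h2 <;> rcases gr01 M b with h3|h3 <;>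
      simp only [h2, h3] <;> omega
  rw [wab] at total
  exact add_left_cancel total


/-- The supertrace transfer matrix enjoys the full `gl(M|N)`
symmetry: `[Δ(E_{ab}), st(u)] = 0` for all `a, b` and all `u`. -/
theorem statement8 (M N : ℕ) (hM : 1 ≤ M) (hN : 1 ≤ N) (hb : ℂ) (hhb : hb ≠ 0)
    (L : ℕ) (hL : 1 ≤ L) (sh : Fin L → ℂ) :
    ∀ (a b : Fin (M + N)) (u : ℂ),
      Delta M (M + N) L a b * stm M (M + N) L hb sh u
        = stm M (M + N) L hb sh u * Delta M (M + N) L a b := by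
  intro a b u
  exact final_assembly M (M + N) L a b hb sh u

end SuperSpin
end
end

section
/- The vector v⁺ = e₁⊗⋯⊗e₁ is a highest weight vector for the monodromy matrix of the inhomogeneous fundamental gl(M|N) chain: for all u ∈ ℂ, 𝒯_{ab}(u)v⁺ = 0 whenever 1 ≤ b < a ≤ n, and 𝒯_{kk}(u)v⁺ = λ_k(u)·v⁺ for every 1 ≤ k ≤ n, where λ₁(u) = Π_{m=1}^L (u−a_m−ħ) and λ_k(u) = Π_{m=1}^L (u−a_m) for 2 ≤ k ≤ n. -/
open scoped BigOperators

noncomputable section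

namespace SuperSpin

section Aux

variable {n L M : ℕ}

/-- `f_p`: the basis index with `b` in slot `p` and `z` elsewhere. -/
def fP {n m : ℕ} (z b : Fin n) (p : Fin m) : Fin m → Fin n :=
  fun l => if l = p then b else z

lemma gr_z (z : Fin n) (hz : (z : ℕ) < M) : gr M z = 0 := if_pos hz

lemma cons_ne_zero_eq (b : Fin n) (z : Fin n) (l : Fin (L+1)) (hl : l ≠ 0) :
    (Fin.cons b (fun _ => z) : Fin (L+1) → Fin n) l = z := by
  rcases Fin.eq_zero_or_eq_succ l with h | ⟨j, rfl⟩
  · exact absurd h hl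
  · exact Fin.cons_succ (α := fun _ => Fin n) b (fun _ => z) j

/-- Column of `kEmb (R)` at `g₀ = cons b z⋯z`, for `b ≠ z`. -/
lemma kEmb_col_g0 (z b : Fin n) (hzM : (z : ℕ) < M) (hbz : b ≠ z) (k : Fin L)
    (u' hb : ℂ) (f : Fin (L+1) → Fin n) :
    kEmb M n (L+1) 0 k.succ (Rm M n hb u') f (Fin.cons b fun _ => z)
      = if f = Fin.cons b (fun _ => z) then u'
        else if f = fP z b k.succ then -hb else 0 := by
  set g : Fin (L+1) → Fin n := Fin.cons b (fun _ => z) with hg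
  have hg0 : g 0 = b := rfl
  have hgk : g k.succ = z := by simp [hg]
  have hsum : ∑ l ∈ Finset.univ.filter (fun l => 0 < l ∧ l < k.succ), gr M (g l) = 0 := by
    apply Finset.sum_eq_zero
    intro l hl
    simp only [Finset.mem_filter] at hl
    rw [hg, cons_ne_zero_eq b z l (Fin.pos_iff_ne_zero.mp hl.2.1)]
    exact gr_z z hzM
  rw [kEmb]
  simp only [Matrix.of_apply, hg0, hgk, hsum, mul_zero, pow_zero, mul_one]
  have hR : Rm M n hb u' (f 0, f k.succ) (b, z)
      = u' * (if f 0 = b ∧ f k.succ = z then 1 else 0)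
        - hb * (if f 0 = z ∧ f k.succ = b then 1 else 0) := by
    simp only [Rm, Matrix.sub_apply, Matrix.smul_apply, Matrix.one_apply, Pm, Matrix.of_apply,
      smul_eq_mul, gr_z z hzM, mul_zero, pow_zero, Prod.mk.injEq]
  rw [hR]
  by_cases hfg : f = g
  · subst hfg
    simp [hg0, hgk, hbz]
  rw [if_neg hfg]
  by_cases hfp : f = fP z b k.succ
  · subst hfp
    have h1 : fP z b k.succ (0 : Fin (L+1)) = z := by
      simp only [fP]; exact if_neg (Fin.succ_ne_zero k).symm
    have h2 : fP z b k.succ k.succ = b := if_pos rfl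
    rw [if_pos rfl]
    have hcond : ∀ l : Fin (L+1), l ≠ 0 → l ≠ k.succ → fP z b k.succ l = g l := by
      intro l h0 hk
      simp only [fP, if_neg hk]
      rw [hg, cons_ne_zero_eq b z l h0]
    rw [if_pos hcond, h1, h2]
    simp [hbz, Ne.symm hbz]
  rw [if_neg hfp]
  by_cases hcond : ∀ l : Fin (L+1), l ≠ 0 → l ≠ k.succ → f l = g l
  · rw [if_pos hcond]
    have hd1 : ¬(f 0 = b ∧ f k.succ = z) := by
      rintro ⟨h1, h2⟩
      apply hfg
      funext l
      rcases Fin.eq_zero_or_eq_succ l with h | ⟨j, rfl⟩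
      · rw [h, h1, hg0]
      · by_cases hj : j.succ = k.succ
        · rw [hj, h2, hgk]
        · exact hcond _ (Fin.succ_ne_zero j) hj
    have hd2 : ¬(f 0 = z ∧ f k.succ = b) := by
      rintro ⟨h1, h2⟩
      apply hfp
      funext l
      rcases Fin.eq_zero_or_eq_succ l with h | ⟨j, rfl⟩
      · rw [h, h1]
        simp only [fP]
        exact (if_neg (Fin.succ_ne_zero k).symm).symm
      · by_cases hj : j.succ = k.succ
        · rw [hj, h2]
          simp [fP]
        · simp only [fP, if_neg hj]
          rw [hcond _ (Fin.succ_ne_zero j) hj, hg, cons_ne_zero_eq b z _ (Fin.succ_ne_zero j)]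
    rw [if_neg hd1, if_neg hd2]
    ring
  · rw [if_neg hcond]
    ring

/-- Column of `kEmb (R)` at `f_p` for `p ∉ {0, k.succ}`: supported on `f_p`. -/
lemma kEmb_col_fP (z b : Fin n) (hzM : (z : ℕ) < M) (k : Fin L) (p : Fin (L+1))
    (hp0 : p ≠ 0) (hpk : p ≠ k.succ) (u' hb : ℂ) (f : Fin (L+1) → Fin n)
    (hf : f ≠ fP z b p) :
    kEmb M n (L+1) 0 k.succ (Rm M n hb u') f (fP z b p) = 0 := by
  set g : Fin (L+1) → Fin n := fP z b p with hg
  have hg0 : g 0 = z := if_neg (Ne.symm hp0)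
  have hgk : g k.succ = z := if_neg (Ne.symm hpk)
  rw [kEmb]
  simp only [Matrix.of_apply, hg0, hgk]
  have hR : Rm M n hb u' (f 0, f k.succ) (z, z)
      = (u' - hb) * (if f 0 = z ∧ f k.succ = z then 1 else 0) := by
    simp only [Rm, Matrix.sub_apply, Matrix.smul_apply, Matrix.one_apply, Pm, Matrix.of_apply,
      smul_eq_mul, gr_z z hzM, mul_zero, pow_zero, Prod.mk.injEq]
    by_cases h : f 0 = z ∧ f k.succ = z
    · rw [if_pos h]; ring
    · rw [if_neg h]; ring
  rw [hR]
  by_cases hcond : ∀ l : Fin (L+1), l ≠ 0 → l ≠ k.succ → f l = g l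
  · rw [if_pos hcond]
    have hd : ¬(f 0 = z ∧ f k.succ = z) := by
      rintro ⟨h1, h2⟩
      apply hf
      funext l
      rcases Fin.eq_zero_or_eq_succ l with h | ⟨j, rfl⟩
      · rw [h, h1, ← hg0, hg]
      · by_cases hj : j.succ = k.succ
        · rw [hj, h2, ← hgk, hg]
        · exact hcond _ (Fin.succ_ne_zero j) hj
    rw [if_neg hd]
    ring
  · rw [if_neg hcond]
    ring

/-- Column of `kEmb (R)` at the all-`z` index: diagonal with value `u' - hb`. -/
lemma kEmb_col_zf (z : Fin n) (hzM : (z : ℕ) < M) (k : Fin L)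
    (u' hb : ℂ) (f : Fin (L+1) → Fin n) :
    kEmb M n (L+1) 0 k.succ (Rm M n hb u') f (fun _ => z)
      = if f = (fun _ => z) then u' - hb else 0 := by
  rw [kEmb]
  simp only [Matrix.of_apply]
  have hsum : ∑ l ∈ Finset.univ.filter
      (fun l : Fin (L+1) => 0 < l ∧ l < k.succ), gr M ((fun _ => z) l) = 0 := by
    apply Finset.sum_eq_zero
    intro l _
    exact gr_z z hzM
  rw [hsum, mul_zero, pow_zero, mul_one]
  have hR : Rm M n hb u' (f 0, f k.succ) ((fun _ : Fin (L+1) => z) 0, (fun _ : Fin (L+1) => z) k.succ)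
      = (u' - hb) * (if f 0 = z ∧ f k.succ = z then 1 else 0) := by
    simp only [Rm, Matrix.sub_apply, Matrix.smul_apply, Matrix.one_apply, Pm, Matrix.of_apply,
      smul_eq_mul, gr_z z hzM, mul_zero, pow_zero, Prod.mk.injEq]
    by_cases h : f 0 = z ∧ f k.succ = z
    · rw [if_pos h]; ring
    · rw [if_neg h]; ring
  rw [hR]
  by_cases hfz : f = fun _ => z
  · rw [if_pos hfz, if_pos (by intro l _ _; rw [hfz]), if_pos ⟨by rw [hfz], by rw [hfz]⟩]
    ring
  · rw [if_neg hfz]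
    by_cases hcond : ∀ l : Fin (L+1), l ≠ 0 → l ≠ k.succ → f l = z
    · rw [if_pos hcond]
      have hd : ¬(f 0 = z ∧ f k.succ = z) := by
        rintro ⟨h1, h2⟩
        apply hfz
        funext l
        by_cases h0 : l = 0
        · rw [h0, h1]
        · by_cases hk : l = k.succ
          · rw [hk, h2]
          · exact hcond l h0 hk
      rw [if_neg hd]; ring
    · rw [if_neg hcond]; ring

/-- Product of a list of matrices each of whose column at `g` is diagonal. -/
lemma prod_col_diag {m : ℕ} (g : Fin m → Fin n) :
    ∀ ls : List (Ten n m), (∀ X ∈ ls, ∀ f, f ≠ g → X f g = 0) →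
      ∀ f, ls.prod f g = if f = g then (ls.map fun X => X g g).prod else 0 := by
  intro ls
  induction ls with
  | nil =>
    intro _ f
    simp [Matrix.one_apply]
  | cons X ls ih =>
    intro h f
    have hW := ih (fun Y hY => h Y (List.mem_cons_of_mem X hY))
    rw [List.prod_cons, Matrix.mul_apply]
    have : ∀ hh : Fin m → Fin n,
        X f hh * ls.prod hh g
          = if hh = g then X f g * (ls.map fun Y => Y g g).prod else 0 := by
      intro hh
      rw [hW hh]
      by_cases hhg : hh = g
      · subst hhg; simp
      · simp [hhg]
    rw [Finset.sum_congr rfl fun hh _ => this hh, Finset.sum_ite_eq']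
    simp only [Finset.mem_univ, if_true, List.map_cons, List.prod_cons]
    by_cases hfg : f = g
    · rw [if_pos hfg, hfg]
    · rw [if_neg hfg, h X List.mem_cons_self f hfg, zero_mul]

lemma mainInv (z b : Fin n) (hzM : (z : ℕ) < M) (hbz : b ≠ z)
    (hb u : ℂ) (sh : Fin L → ℂ) :
    ∀ d : ℕ, d ≤ L →
      (((List.ofFn fun k : Fin L =>
          kEmb M n (L+1) 0 k.succ (Rm M n hb (u - sh k))).drop (L - d)).prod
            (Fin.cons b fun _ => z) (Fin.cons b fun _ => z)
          = ∏ k ∈ Finset.univ.filter (fun k : Fin L => L - d ≤ (k : ℕ)), (u - sh k)) ∧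
      (∀ f, f ≠ (Fin.cons b fun _ => z) →
        ((List.ofFn fun k : Fin L =>
            kEmb M n (L+1) 0 k.succ (Rm M n hb (u - sh k))).drop (L - d)).prod
              f (Fin.cons b fun _ => z) ≠ 0 →
        ∃ p : Fin (L+1), L - d + 1 ≤ (p : ℕ) ∧ f = fP z b p) := by
  set ls : List (Ten n (L+1)) := List.ofFn fun k : Fin L =>
    kEmb M n (L+1) 0 k.succ (Rm M n hb (u - sh k)) with hls
  have hlen : ls.length = L := by rw [hls, List.length_ofFn]
  set g : Fin (L+1) → Fin n := Fin.cons b (fun _ => z) with hgdef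
  intro d
  induction d with
  | zero =>
    intro _
    have hdrop : ls.drop (L - 0) = [] := by
      rw [Nat.sub_zero]
      exact List.drop_eq_nil_of_le (by rw [hlen])
    rw [hdrop]
    constructor
    · rw [List.prod_nil, Matrix.one_apply_eq]
      rw [Finset.prod_eq_one]
      intro k hk
      simp only [Finset.mem_filter, Nat.sub_zero] at hk
      exact absurd hk.2 (by omega)
    · intro f hf hne
      exact absurd (by rw [List.prod_nil, Matrix.one_apply_ne hf]) hne
  | succ d ih =>
    intro hd1
    have hd : d ≤ L := by omega
    obtain ⟨hdiag, hsupp⟩ := ih hd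
    have hm : L - (d+1) < ls.length := by rw [hlen]; omega
    have hm1 : L - (d+1) + 1 = L - d := by omega
    set km : Fin L := ⟨L - (d+1), by omega⟩ with hkm
    have hX : ls[L - (d+1)]'hm = kEmb M n (L+1) 0 km.succ (Rm M n hb (u - sh km)) :=
      List.getElem_ofFn _
    have hdrop : ls.drop (L - (d+1))
        = kEmb M n (L+1) 0 km.succ (Rm M n hb (u - sh km)) :: ls.drop (L - d) := by
      rw [List.drop_eq_getElem_cons hm, hX, hm1]
    rw [hdrop]
    have hg0fP : ∀ p : Fin (L+1), p ≠ 0 → g ≠ fP z b p := by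
      intro p hp0 hEq
      have := congrFun hEq 0
      rw [hgdef] at this
      simp only [Fin.cons_zero, fP, if_neg (Ne.symm hp0)] at this
      exact hbz this
    constructor
    · rw [List.prod_cons, Matrix.mul_apply]
      rw [Finset.sum_eq_single g]
      · rw [hdiag, kEmb_col_g0 z b hzM hbz km (u - sh km) hb g, if_pos rfl]
        have hins : (Finset.univ.filter fun k : Fin L => L - (d+1) ≤ (k : ℕ))
            = insert km (Finset.univ.filter fun k : Fin L => L - d ≤ (k : ℕ)) := by
          ext k
          simp only [Finset.mem_filter, Finset.mem_insert, Finset.mem_univ, true_and,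
            hkm, Fin.ext_iff]
          omega
        have hnm : km ∉ (Finset.univ.filter fun k : Fin L => L - d ≤ (k : ℕ)) := by
          simp only [Finset.mem_filter, Finset.mem_univ, true_and, hkm]
          omega
        rw [hins, Finset.prod_insert hnm]
      · intro h _ hhg
        by_cases hW : (ls.drop (L - d)).prod h g = 0
        · rw [hW, mul_zero]
        · obtain ⟨p, hp, rfl⟩ := hsupp h hhg hW
          have hp0 : p ≠ 0 := by
            intro h0; rw [h0] at hp; simp at hp
          have hpk : p ≠ km.succ := by
            intro hEq
            rw [hEq] at hp
            simp only [Fin.val_succ, hkm] at hp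
            omega
          rw [kEmb_col_fP z b hzM km p hp0 hpk (u - sh km) hb g (hg0fP p hp0), zero_mul]
      · intro habs
        exact absurd (Finset.mem_univ g) habs
    · intro f hfg hne
      by_cases hex : ∃ p : Fin (L+1), L - (d+1) + 1 ≤ (p : ℕ) ∧ f = fP z b p
      · exact hex
      exfalso
      push_neg at hex
      apply hne
      rw [List.prod_cons, Matrix.mul_apply]
      apply Finset.sum_eq_zero
      intro h _
      by_cases hW : (ls.drop (L - d)).prod h g = 0
      · rw [hW, mul_zero]
      by_cases hhg : h = g
      · rw [hhg, kEmb_col_g0 z b hzM hbz km (u - sh km) hb f, if_neg hfg,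
          if_neg, zero_mul]
        exact hex km.succ (by simp [hkm])
      · obtain ⟨p, hp, rfl⟩ := hsupp h hhg hW
        have hp0 : p ≠ 0 := by
          intro h0; rw [h0] at hp; simp at hp
        have hpk : p ≠ km.succ := by
          intro hEq
          rw [hEq] at hp
          simp only [Fin.val_succ, hkm] at hp
          omega
        rw [kEmb_col_fP z b hzM km p hp0 hpk (u - sh km) hb f
          (hex p (by omega)), zero_mul]

end Aux

/-- `v⁺ = e₁ ⊗ ⋯ ⊗ e₁` is a highest weight vector for the
monodromy matrix: `𝒯_{ab}(u) v⁺ = 0` for `b < a`, and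
`𝒯_{kk}(u) v⁺ = λ_k(u) v⁺` with `λ₁(u) = ∏ (u - a_m - ħ)` and
`λ_k(u) = ∏ (u - a_m)` for `k ≥ 2`. -/
theorem statement10 (M N : ℕ) (hM : 1 ≤ M) (hN : 1 ≤ N) (hb : ℂ) (hhb : hb ≠ 0)
    (L : ℕ) (hL : 1 ≤ L) (sh : Fin L → ℂ) (u : ℂ) :
    (∀ a b : Fin (M + N), b < a →
      (blk (Tmono M (M + N) L hb sh u) a b).mulVec (vplus (M + N) L) = 0) ∧
    (∀ k : Fin (M + N),
      (blk (Tmono M (M + N) L hb sh u) k k).mulVec (vplus (M + N) L)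
        = lamP L hb sh ((k : ℕ) + 1) u • vplus (M + N) L) := by
  have hz' : (0 : ℕ) < M + N := by omega
  set z : Fin (M + N) := ⟨0, hz'⟩ with hzdef
  have hzM : (z : ℕ) < M := hM
  have hzv : (z : ℕ) = 0 := rfl
  set ls : List (Ten (M + N) (L + 1)) := List.ofFn fun k : Fin L =>
    kEmb M (M + N) (L + 1) 0 k.succ (Rm M (M + N) hb (u - sh k)) with hls
  have hT : Tmono M (M + N) L hb sh u = ls.prod := rfl
  have hv : ∀ g : Fin L → Fin (M + N),
      vplus (M + N) L g = if g = (fun _ => z) then 1 else 0 := by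
    intro g
    rw [vplus]
    by_cases h : ∀ l, ((g l) : ℕ) = 0
    · rw [if_pos h, if_pos (funext fun l => Fin.ext (h l))]
    · rw [if_neg h, if_neg (fun hg => h fun l => by rw [hg])]
  have hmv : ∀ (a b : Fin (M + N)) (f : Fin L → Fin (M + N)),
      ((blk (Tmono M (M + N) L hb sh u) a b).mulVec (vplus (M + N) L)) f
        = Tmono M (M + N) L hb sh u (Fin.cons a f) (Fin.cons b fun _ => z) := by
    intro a b f
    simp only [Matrix.mulVec, dotProduct, hv, mul_ite, mul_one, mul_zero,
      Finset.sum_ite_eq', Finset.mem_univ, if_true, blk, Matrix.of_apply]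
  -- diagonal column lemma for the all-z column
  have hdiagcol : ∀ X ∈ ls, ∀ f' : Fin (L + 1) → Fin (M + N),
      f' ≠ (fun _ => z) → X f' (fun _ => z) = 0 := by
    intro X hX f' hf'
    rw [hls] at hX
    obtain ⟨k, rfl⟩ := List.mem_ofFn.mp hX
    show kEmb M (M + N) (L + 1) 0 k.succ (Rm M (M + N) hb (u - sh k)) f' (fun _ => z) = 0
    rw [kEmb_col_zf z hzM k (u - sh k) hb f', if_neg hf']
  have hzfprod : ∀ f' : Fin (L + 1) → Fin (M + N),
      ls.prod f' (fun _ => z)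
        = if f' = (fun _ => z) then ∏ m : Fin L, (u - sh m - hb) else 0 := by
    intro f'
    rw [prod_col_diag (fun _ => z) ls hdiagcol f']
    congr 1
    rw [hls, List.map_ofFn, List.prod_ofFn]
    apply Finset.prod_congr rfl
    intro k _
    simp only [Function.comp]
    rw [kEmb_col_zf z hzM k (u - sh k) hb _, if_pos rfl]
  have hconsz : ∀ b : Fin (M + N), b = z →
      (Fin.cons b (fun _ => z) : Fin (L + 1) → Fin (M + N)) = fun _ => z := by
    intro b hbz
    funext l
    rcases Fin.eq_zero_or_eq_succ l with h | ⟨j, rfl⟩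
    · rw [h]; simpa using hbz
    · exact Fin.cons_succ (α := fun _ => Fin (M + N)) b (fun _ => z) j
  have hInv := mainInv (M := M) (n := M + N) (L := L) z
  constructor
  · intro a b hba
    have haz : a ≠ z := by
      intro h
      rw [h] at hba
      have : (b : ℕ) < (z : ℕ) := hba
      rw [hzv] at this
      omega
    funext f
    rw [Pi.zero_apply, hmv, hT]
    by_cases hbz : b = z
    · rw [hconsz b hbz, hzfprod]
      rw [if_neg]
      intro hEq
      exact haz (by simpa using congrFun hEq 0)
    · have hm := (hInv b hzM hbz hb u sh L le_rfl).2
      rw [Nat.sub_self, List.drop_zero] at hm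
      by_contra hne
      have hcfg : (Fin.cons a f : Fin (L + 1) → Fin (M + N)) ≠ (Fin.cons b fun _ => z) := by
        intro hEq
        exact (Fin.ne_of_lt hba).symm (by simpa using congrFun hEq 0)
      obtain ⟨p, hp, hEq⟩ := hm (Fin.cons a f) hcfg hne
      have hp0 : p ≠ 0 := by
        intro h0; rw [h0] at hp; exact absurd hp (by simp)
      have : a = z := by
        have := congrFun hEq 0
        simpa [fP, if_neg (Ne.symm hp0)] using this
      exact haz this
  · intro k
    funext f
    have hsm : (lamP L hb sh ((k : ℕ) + 1) u • vplus (M + N) L) f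
        = lamP L hb sh ((k : ℕ) + 1) u * (if f = (fun _ => z) then 1 else 0) := by
      rw [Pi.smul_apply, smul_eq_mul, hv]
    rw [hmv, hT, hsm]
    by_cases hkz : k = z
    · rw [hconsz k hkz, hzfprod]
      have hone : (k : ℕ) + 1 = 1 := by rw [hkz]
      rw [hone, lamP, if_pos rfl]
      have hiff : (Fin.cons k f : Fin (L + 1) → Fin (M + N)) = (fun _ => z) ↔
          f = (fun _ => z) := by
        constructor
        · intro hEq
          funext l
          have := congrFun hEq l.succ
          simpa using this
        · intro hEq
          rw [hEq]
          exact hconsz k hkz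
      by_cases hfz : f = (fun _ => z)
      · rw [if_pos (hiff.mpr hfz), if_pos hfz, mul_one]
      · rw [if_neg (fun h => hfz (hiff.mp h)), if_neg hfz, mul_zero]
    · have hlam : lamP L hb sh ((k : ℕ) + 1) u = ∏ m : Fin L, (u - sh m) := by
        rw [lamP, if_neg]
        intro h
        exact hkz (Fin.ext (by simp only [hzv]; omega))
      rw [hlam]
      have hm := hInv k hzM hkz hb u sh L le_rfl
      rw [Nat.sub_self, List.drop_zero] at hm
      by_cases hfz : f = (fun _ => z)
      · subst hfz
        have : (Fin.cons k (fun _ => z) : Fin (L + 1) → Fin (M + N))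
            = Fin.cons k fun _ => z := rfl
        rw [if_pos rfl, mul_one]
        have hd := hm.1
        have hfilter : (Finset.univ.filter fun k' : Fin L => 0 ≤ (k' : ℕ))
            = Finset.univ := by
          apply Finset.filter_true_of_mem
          intro x _
          omega
        rw [hfilter] at hd
        exact hd
      · rw [if_neg hfz, mul_zero]
        have hcfg : (Fin.cons k f : Fin (L + 1) → Fin (M + N)) ≠ (Fin.cons k fun _ => z) := by
          intro hEq
          apply hfz
          funext l
          simpa using congrFun hEq l.succ
        by_contra hne
        obtain ⟨p, hp, hEq⟩ := hm.2 (Fin.cons k f) hcfg hne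
        have hp0 : p ≠ 0 := by
          intro h0; rw [h0] at hp; exact absurd hp (by simp)
        have : k = z := by
          have := congrFun hEq 0
          simpa [fP, if_neg (Ne.symm hp0)] using this
        exact hkz this

end SuperSpin
end
end

section
/- Construction of the reflection algebra representation: let H be a finite-dimensional ℤ₂-graded complex vector space, D ⊆ ℂ a symmetric subset (u ∈ D ⇒ −u ∈ D), and T : D → End(V⊗H) a function such that every T(u) is an even invertible operator and the RTT relation R₁₂(u−v)∘T₁(u)∘T₂(v) = T₂(v)∘T₁(u)∘R₁₂(u−v) holds in End(V⊗V⊗H) for all u,v ∈ D, where T₂(u) = id_V⊗T(u), T₁(u) = (P⊗id_H)∘(id_V⊗T(u))∘(P⊗id_H), and R₁₂(x) = R(x)⊗id_H. Let K : ℂ → Mat_n(ℂ) be parity-preserving (K_{ij}(u) = 0 whenever [i] ≠ [j]) and satisfy the graded reflection equation. Then B(u) := T(u)∘(K(u)⊗id_H)∘T(−u)⁻¹ satisfies the graded reflection equation with operator entries: R₁₂(u−v)B₁(u)R₂₁(u+v)B₂(v) = B₂(v)R₁₂(u+v)B₁(u)R₂₁(u−v) in End(V⊗V⊗H), for all u,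 v ∈ D with (u+v)² ≠ ħ² and (u−v)² ≠ ħ², where B₁, B₂ are embedded like T₁, T₂ and R₂₁(x) = (P⊗id_H)∘R₁₂(x)∘(P⊗id_H). -/
open scoped BigOperators

noncomputable section

namespace SuperSpin

/-- Operators on `V ⊗ H`, where `H` has homogeneous basis indexed by `ι`. -/
abbrev EVH (n : ℕ) (ι : Type) := Matrix (Fin n × ι) (Fin n × ι) ℂ

/-- Operators on `V ⊗ V ⊗ H`. -/
abbrev EVVH (n : ℕ) (ι : Type) := Matrix (Fin n × Fin n × ι) (Fin n × Fin n × ι) ℂ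

/-- `T₂ = id_V ⊗ T` for an (even) operator `T` on `V ⊗ H`. -/
def opT2 {n : ℕ} {ι : Type} [DecidableEq ι] (X : EVH n ι) : EVVH n ι :=
  Matrix.of fun p q => (if p.1 = q.1 then 1 else 0) * X (p.2.1, p.2.2) (q.2.1, q.2.2)

/-- `P ⊗ id_H` on `V ⊗ V ⊗ H`. -/
def P12H (M n : ℕ) (ι : Type) [DecidableEq ι] : EVVH n ι :=
  Matrix.of fun p q => Pm M n (p.1, p.2.1) (q.1, q.2.1) * (if p.2.2 = q.2.2 then 1 else 0)

/-- `T₁ = (P ⊗ id_H) ∘ (id_V ⊗ T) ∘ (P ⊗ id_H)`. -/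
def opT1 (M n : ℕ) {ι : Type} [Fintype ι] [DecidableEq ι] (X : EVH n ι) : EVVH n ι :=
  P12H M n ι * opT2 X * P12H M n ι

/-- `R₁₂(x) = R(x) ⊗ id_H` on `V ⊗ V ⊗ H`. -/
def R12H (M n : ℕ) (ι : Type) [DecidableEq ι] (hb x : ℂ) : EVVH n ι :=
  Matrix.of fun p q =>
    Rm M n hb x (p.1, p.2.1) (q.1, q.2.1) * (if p.2.2 = q.2.2 then 1 else 0)

/-- `R₂₁(x) = (P ⊗ id_H) ∘ R₁₂(x) ∘ (P ⊗ id_H)`. -/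
def R21H (M n : ℕ) (ι : Type) [Fintype ι] [DecidableEq ι] (hb x : ℂ) : EVVH n ι :=
  P12H M n ι * R12H M n ι hb x * P12H M n ι

/-- `K ⊗ id_H` on `V ⊗ H`. -/
def KH {n : ℕ} {ι : Type} [DecidableEq ι] (A : Matrix (Fin n) (Fin n) ℂ) : EVH n ι :=
  Matrix.of fun p q => A p.1 q.1 * (if p.2 = q.2 then 1 else 0)

/-- An operator on the graded space `V ⊗ H` is even when all its matrix entries
between components of different total parity vanish. -/
def IsEvenOp (M : ℕ) {n : ℕ} {ι : Type} (grH : ι → ℕ) (X : EVH n ι) : Prop :=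
  ∀ p q : Fin n × ι,
    (gr M p.1 + grH p.2) % 2 ≠ (gr M q.1 + grH q.2) % 2 → X p q = 0

section Aux

open Kronecker

/-! ### Abstract monoid word lemmas -/

variable {α : Type*} [Monoid α]

lemma w2 {a b : α} (h : a * b = b * a) (X : α) : a * (b * X) = b * (a * X) := by
  rw [← mul_assoc, h, mul_assoc]

lemma w3 {a b c d e f : α} (h : a * (b * c) = d * (e * f)) (X : α) :
    a * (b * (c * X)) = d * (e * (f * X)) := by
  rw [show a * (b * (c * X)) = a * (b * c) * X from by simp only [mul_assoc], h]
  simp only [mul_assoc]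

lemma w4 {a b c d e f g h' : α} (h : a * (b * (c * d)) = e * (f * (g * h'))) (X : α) :
    a * (b * (c * (d * X))) = e * (f * (g * (h' * X))) := by
  rw [show a * (b * (c * (d * X))) = a * (b * (c * d)) * X from by simp only [mul_assoc], h]
  simp only [mul_assoc]

lemma mcancel {a b : α} (h : a * b = 1) (Z : α) : a * (b * Z) = Z := by
  rw [← mul_assoc, h, one_mul]

lemma step_inv {A Ai X Xi Y : α} (hA1 : A * Ai = 1) (hA2 : Ai * A = 1)
    (hX1 : X * Xi = 1) (hX2 : Xi * X = 1) (h : A * (X * Y) = Y * (X * A)) :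
    Xi * (Ai * Y) = Y * (Ai * Xi) := by
  calc Xi * (Ai * Y) = Xi * (Ai * (Y * (X * (A * (Ai * Xi))))) := by
        rw [mcancel hA1, hX1, mul_one]
    _ = Xi * (Ai * (A * (X * (Y * (Ai * Xi))))) := by rw [w3 h]
    _ = Xi * (X * (Y * (Ai * Xi))) := by rw [mcancel hA2]
    _ = Y * (Ai * Xi) := by rw [mcancel hX2]

lemma step_inv2 {A Ai X Xi Y Yi : α} (hA1 : A * Ai = 1) (hA2 : Ai * A = 1)
    (hX1 : X * Xi = 1) (hX2 : Xi * X = 1) (hY1 : Y * Yi = 1) (hY2 : Yi * Y = 1)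
    (h : A * (X * Y) = Y * (X * A)) :
    Yi * (Xi * Ai) = Ai * (Xi * Yi) := by
  calc Yi * (Xi * Ai) = Ai * (Xi * (Yi * (Y * (X * (A * (Yi * (Xi * Ai))))))) := by
        rw [mcancel hY2, mcancel hX2, mcancel hA2]
    _ = Ai * (Xi * (Yi * (A * (X * (Y * (Yi * (Xi * Ai))))))) := by rw [← w3 h]
    _ = Ai * (Xi * Yi) := by rw [mcancel hY1, mcancel hX1, hA1, mul_one]

lemma refl_chain (Rm' Rp' T1u T2v S1 S2 K1 K2 : α)
    (hA : Rm' * (T1u * T2v) = T2v * (T1u * Rm'))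
    (hB : S1 * (Rp' * T2v) = T2v * (Rp' * S1))
    (hC : S2 * (Rp' * T1u) = T1u * (Rp' * S2))
    (hDD : Rm' * (S1 * S2) = S2 * (S1 * Rm'))
    (h1 : K1 * T2v = T2v * K1) (h2 : S1 * K2 = K2 * S1)
    (h3 : K2 * T1u = T1u * K2) (h4 : K1 * S2 = S2 * K1)
    (hF : Rm' * (K1 * (Rp' * K2)) = K2 * (Rp' * (K1 * Rm'))) :
    Rm' * (T1u * K1 * S1) * Rp' * (T2v * K2 * S2)
      = T2v * K2 * S2 * Rp' * (T1u * K1 * S1) * Rm' := by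
  simp only [mul_assoc]
  rw [w3 hB, w2 h1, w2 h2, w3 hA, w4 hF, hDD, w2 h4, ← w2 h3, ← w3 hC]

end Aux

section MatrixAux

open Kronecker

variable {M n : ℕ} {ι : Type} [Fintype ι] [DecidableEq ι]

/-! ### E2-level lemmas -/

lemma Pm_mul_apply (Z : E2 n) (p q : Fin n × Fin n) :
    (Pm M n * Z) p q = (-1 : ℂ) ^ (gr M p.2 * gr M p.1) * Z (p.2, p.1) q := by
  rw [Matrix.mul_apply, Finset.sum_eq_single ((p.2, p.1) : Fin n × Fin n)]
  · simp [Pm]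
  · intro r _ hr
    have h : ¬(p.1 = r.2 ∧ p.2 = r.1) := by
      rintro ⟨h1, h2⟩
      exact hr (Prod.ext_iff.mpr ⟨h2.symm, h1.symm⟩)
    simp [Pm, h]
  · intro h; exact absurd (Finset.mem_univ _) h

lemma mul_Pm_apply (Z : E2 n) (p q : Fin n × Fin n) :
    (Z * Pm M n) p q = Z p (q.2, q.1) * (-1 : ℂ) ^ (gr M q.1 * gr M q.2) := by
  rw [Matrix.mul_apply, Finset.sum_eq_single ((q.2, q.1) : Fin n × Fin n)]
  · simp [Pm]
  · intro r _ hr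
    have h : ¬(r.1 = q.2 ∧ r.2 = q.1) := by
      rintro ⟨h1, h2⟩
      exact hr (Prod.ext_iff.mpr ⟨h1, h2⟩)
    simp [Pm, h]
  · intro h; exact absurd (Finset.mem_univ _) h

lemma neg_one_sq_pow (e : ℕ) : ((-1 : ℂ) ^ e) * ((-1 : ℂ) ^ e) = 1 := by
  rw [← pow_add, ← two_mul, pow_mul]
  norm_num

lemma Pm_sq : Pm M n * Pm M n = 1 := by
  ext p q
  rw [Pm_mul_apply]
  by_cases h : p = q
  · subst h
    simp only [Pm, Matrix.of_apply, Matrix.one_apply_eq, and_self, if_true]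
    rw [mul_comm (gr M p.1) (gr M p.2)]
    exact neg_one_sq_pow _
  · have h2 : ¬(p.2 = q.2 ∧ p.1 = q.1) := by
      rintro ⟨h1, h2'⟩
      exact h (Prod.ext_iff.mpr ⟨h2', h1⟩)
    simp [Pm, h2, Matrix.one_apply_ne h]

lemma Pm_m2_Pm (A : Matrix (Fin n) (Fin n) ℂ)
    (hA : ∀ i j : Fin n, gr M i ≠ gr M j → A i j = 0) :
    Pm M n * m2 A * Pm M n = m1 A := by
  ext p q
  rw [mul_Pm_apply, Pm_mul_apply]
  simp only [m1, m2, Matrix.of_apply]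
  by_cases h2 : p.2 = q.2
  · by_cases h0 : A p.1 q.1 = 0
    · simp [h0, h2]
    · have hg : gr M p.1 = gr M q.1 := by
        by_contra hg
        exact h0 (hA _ _ hg)
      rw [if_pos h2, one_mul, mul_one, h2, hg]
      rw [mul_comm (gr M q.2) (gr M q.1), mul_right_comm, neg_one_sq_pow, one_mul]
  · simp [h2]

lemma Pm_Rm_Pm (hb x : ℂ) : Pm M n * Rm M n hb x * Pm M n = Rm M n hb x := by
  have h : Pm M n * Pm M n = 1 := Pm_sq
  simp only [Rm, mul_sub, sub_mul, mul_smul_comm, smul_mul_assoc, mul_one, one_mul, h]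

lemma R21_eq (hb x : ℂ) : R21 M n hb x = Rm M n hb x := Pm_Rm_Pm hb x

lemma Rm_unit (hb x : ℂ) :
    Rm M n hb x * Rm M n hb (-x) = (hb ^ 2 - x ^ 2) • (1 : E2 n) := by
  have h : Pm M n * Pm M n = 1 := Pm_sq
  simp only [Rm, sub_mul, mul_sub, smul_mul_assoc, mul_smul_comm, smul_smul,
    mul_one, one_mul, h]
  module

/-! ### The embedding `Phi : End(V⊗V) → End(V⊗V⊗H)` -/

def Phi (n : ℕ) (ι : Type) [Fintype ι] [DecidableEq ι] (X : E2 n) : EVVH n ι :=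
  (X ⊗ₖ (1 : Matrix ι ι ℂ)).submatrix
    ((Equiv.prodAssoc (Fin n) (Fin n) ι).symm)
    ((Equiv.prodAssoc (Fin n) (Fin n) ι).symm)

lemma Phi_mul (X Y : E2 n) : Phi n ι (X * Y) = Phi n ι X * Phi n ι Y := by
  unfold Phi
  rw [Matrix.submatrix_mul_equiv, ← Matrix.mul_kronecker_mul, one_mul]

lemma Phi_one : Phi n ι (1 : E2 n) = 1 := by
  unfold Phi
  rw [Matrix.one_kronecker_one, Matrix.submatrix_one_equiv]

lemma Phi_smul (c : ℂ) (X : E2 n) : Phi n ι (c • X) = c • Phi n ι X := by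
  unfold Phi
  rw [Matrix.smul_kronecker]
  rfl

lemma Phi_apply (X : E2 n) (p q : Fin n × Fin n × ι) :
    Phi n ι X p q = X (p.1, p.2.1) (q.1, q.2.1) * (if p.2.2 = q.2.2 then 1 else 0) := by
  simp [Phi, Matrix.submatrix_apply, Matrix.kroneckerMap_apply, Matrix.one_apply,
    Equiv.prodAssoc]

lemma R12H_eq (hb x : ℂ) : R12H M n ι hb x = Phi n ι (Rm M n hb x) := by
  ext p q
  rw [Phi_apply]
  rfl

lemma P12H_eq : P12H M n ι = Phi n ι (Pm M n) := by
  ext p q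
  rw [Phi_apply]
  rfl

lemma opT2_eq (X : EVH n ι) : opT2 X = (1 : Matrix (Fin n) (Fin n) ℂ) ⊗ₖ X := by
  ext p q
  simp [opT2, Matrix.kroneckerMap_apply, Matrix.one_apply]

lemma opT2_mul (X Y : EVH n ι) : opT2 (X * Y) = opT2 X * opT2 Y := by
  rw [opT2_eq, opT2_eq, opT2_eq, ← Matrix.mul_kronecker_mul, one_mul]

lemma opT2_one : opT2 (1 : EVH n ι) = 1 := by
  rw [opT2_eq, Matrix.one_kronecker_one]

lemma opT2KH_eq (A : Matrix (Fin n) (Fin n) ℂ) :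
    opT2 (KH (ι := ι) A) = Phi n ι (m2 A) := by
  ext p q
  simp [opT2, KH, m2, Phi_apply, mul_assoc]

lemma m1_kron (A : Matrix (Fin n) (Fin n) ℂ) :
    Phi n ι (m1 A) = A ⊗ₖ (1 : Matrix (Fin n × ι) (Fin n × ι) ℂ) := by
  ext p q
  simp only [Phi_apply, m1, Matrix.of_apply, Matrix.kroneckerMap_apply, Matrix.one_apply]
  by_cases h1 : p.2.1 = q.2.1 <;> by_cases h2 : p.2.2 = q.2.2 <;>
    simp [Prod.ext_iff, h1, h2]

lemma m1_comm (A : Matrix (Fin n) (Fin n) ℂ) (X : EVH n ι) :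
    Phi n ι (m1 A) * opT2 X = opT2 X * Phi n ι (m1 A) := by
  rw [m1_kron, opT2_eq, ← Matrix.mul_kronecker_mul, ← Matrix.mul_kronecker_mul]
  simp only [Matrix.mul_one, Matrix.one_mul]

/-! ### Conjugation by `P ⊗ id_H` -/

lemma conj_mul' {P A B : EVVH n ι} (hP : P * P = 1) :
    (P * A * P) * (P * B * P) = P * (A * B) * P := by
  simp only [mul_assoc]
  rw [← mul_assoc P P, hP, one_mul]

lemma P12H_sq : P12H M n ι * P12H M n ι = 1 := by
  rw [P12H_eq, ← Phi_mul, Pm_sq, Phi_one]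

lemma opT1_mul (X Y : EVH n ι) :
    opT1 M n (X * Y) = opT1 M n X * opT1 M n Y := by
  simp only [opT1]
  rw [opT2_mul, conj_mul' P12H_sq]

lemma opT1_one : opT1 M n (1 : EVH n ι) = 1 := by
  simp only [opT1]
  rw [opT2_one, mul_one, P12H_sq]

lemma conjP_opT2 (X : EVH n ι) :
    P12H M n ι * opT2 X * P12H M n ι = opT1 M n X := rfl

lemma conjP_opT1 (X : EVH n ι) :
    P12H M n ι * opT1 M n X * P12H M n ι = opT2 X := by
  simp only [opT1, ← mul_assoc]
  rw [P12H_sq, one_mul, mul_assoc, P12H_sq, mul_one]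

lemma R21H_eq (hb x : ℂ) : R21H M n ι hb x = R12H M n ι hb x := by
  unfold R21H
  rw [P12H_eq, R12H_eq, ← Phi_mul, ← Phi_mul, Pm_Rm_Pm]

lemma conjP_R (hb x : ℂ) :
    P12H M n ι * R12H M n ι hb x * P12H M n ι = R12H M n ι hb x := R21H_eq hb x

lemma R12H_unit (hb x : ℂ) :
    R12H M n ι hb x * R12H M n ι hb (-x) = (hb ^ 2 - x ^ 2) • (1 : EVVH n ι) := by
  rw [R12H_eq, R12H_eq, ← Phi_mul, Rm_unit, Phi_smul, Phi_one]

lemma opT1_K (A : Matrix (Fin n) (Fin n) ℂ)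
    (hA : ∀ i j : Fin n, gr M i ≠ gr M j → A i j = 0) :
    opT1 M n (KH (ι := ι) A) = Phi n ι (m1 A) := by
  simp only [opT1]
  rw [opT2KH_eq, P12H_eq, ← Phi_mul, ← Phi_mul, Pm_m2_Pm A hA]

lemma comm2 (A : Matrix (Fin n) (Fin n) ℂ)
    (hA : ∀ i j : Fin n, gr M i ≠ gr M j → A i j = 0) (X : EVH n ι) :
    opT1 M n X * opT2 (KH (ι := ι) A) = opT2 (KH (ι := ι) A) * opT1 M n X := by
  have hK : opT2 (KH (ι := ι) A) = P12H M n ι * Phi n ι (m1 A) * P12H M n ι := by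
    have h1 : Phi n ι (m1 A) = P12H M n ι * Phi n ι (m2 A) * P12H M n ι := by
      rw [P12H_eq, ← Phi_mul, ← Phi_mul, Pm_m2_Pm A hA]
    have h2 : P12H M n ι * Phi n ι (m1 A) * P12H M n ι = Phi n ι (m2 A) := by
      rw [h1]
      simp only [← mul_assoc]
      rw [P12H_sq, one_mul, mul_assoc, P12H_sq, mul_one]
    rw [opT2KH_eq, ← h2]
  rw [hK]
  simp only [opT1]
  rw [conj_mul' P12H_sq, conj_mul' P12H_sq, m1_comm]

end MatrixAux

/-- If `T` is an even invertible solution of the RTT relation on a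
symmetric domain `D` and `K` is a parity-preserving solution of the graded
reflection equation, then `B(u) = T(u) (K(u) ⊗ id_H) T(-u)⁻¹` satisfies the graded
reflection equation with operator entries. -/
theorem statement13 (M N : ℕ) (hM : 1 ≤ M) (hN : 1 ≤ N) (hb : ℂ) (hhb : hb ≠ 0)
    (ι : Type) [Fintype ι] [DecidableEq ι] (grH : ι → ℕ)
    (D : Set ℂ) (hD : ∀ u ∈ D, -u ∈ D)
    (T : ℂ → EVH (M + N) ι)
    (hEven : ∀ u ∈ D, IsEvenOp M grH (T u))
    (hInv : ∀ u ∈ D, IsUnit (T u))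
    (hRTT : ∀ u ∈ D, ∀ v ∈ D,
      R12H M (M + N) ι hb (u - v) * opT1 M (M + N) (T u) * opT2 (T v)
        = opT2 (T v) * opT1 M (M + N) (T u) * R12H M (M + N) ι hb (u - v))
    (K : ℂ → Matrix (Fin (M + N)) (Fin (M + N)) ℂ)
    (hKpar : ∀ (u : ℂ) (i j : Fin (M + N)), gr M i ≠ gr M j → K u i j = 0)
    (hKre : GRE M (M + N) hb K) :
    ∀ u ∈ D, ∀ v ∈ D, (u + v) ^ 2 ≠ hb ^ 2 → (u - v) ^ 2 ≠ hb ^ 2 →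
      R12H M (M + N) ι hb (u - v) *
        opT1 M (M + N) (T u * KH (K u) * (T (-u))⁻¹) *
        R21H M (M + N) ι hb (u + v) *
        opT2 (T v * KH (K v) * (T (-v))⁻¹)
      = opT2 (T v * KH (K v) * (T (-v))⁻¹) *
        R12H M (M + N) ι hb (u + v) *
        opT1 M (M + N) (T u * KH (K u) * (T (-u))⁻¹) *
        R21H M (M + N) ι hb (u - v) := by
  intro u hu v hv hup hum
  have hmu : -u ∈ D := hD u hu
  have hmv : -v ∈ D := hD v hv
  have hTl : ∀ w ∈ D, T w * (T w)⁻¹ = 1 := fun w hw =>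
    Matrix.mul_nonsing_inv _ ((Matrix.isUnit_iff_isUnit_det _).mp (hInv w hw))
  have hTr : ∀ w ∈ D, (T w)⁻¹ * T w = 1 := fun w hw =>
    Matrix.nonsing_inv_mul _ ((Matrix.isUnit_iff_isUnit_det _).mp (hInv w hw))
  have hS1a : opT1 M (M + N) (T (-u)) * opT1 M (M + N) ((T (-u))⁻¹) = 1 := by
    rw [← opT1_mul, hTl _ hmu, opT1_one]
  have hS1b : opT1 M (M + N) ((T (-u))⁻¹) * opT1 M (M + N) (T (-u)) = 1 := by
    rw [← opT1_mul, hTr _ hmu, opT1_one]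
  have hS2a : opT2 (T (-v)) * opT2 ((T (-v))⁻¹) = 1 := by
    rw [← opT2_mul, hTl _ hmv, opT2_one]
  have hS2b : opT2 ((T (-v))⁻¹) * opT2 (T (-v)) = 1 := by
    rw [← opT2_mul, hTr _ hmv, opT2_one]
  have hcp : (hb ^ 2 - (u + v) ^ 2) ≠ 0 := sub_ne_zero.mpr (Ne.symm hup)
  have hcm : (hb ^ 2 - (u - v) ^ 2) ≠ 0 := sub_ne_zero.mpr (Ne.symm hum)
  have hRa : R12H M (M + N) ι hb (-(u + v)) *
      ((hb ^ 2 - (u + v) ^ 2)⁻¹ • R12H M (M + N) ι hb (u + v)) = 1 := by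
    have h := R12H_unit (M := M) (n := M + N) (ι := ι) hb (-(u + v))
    rw [neg_neg, neg_sq] at h
    rw [mul_smul_comm, h, smul_smul, inv_mul_cancel₀ hcp, one_smul]
  have hRb : ((hb ^ 2 - (u + v) ^ 2)⁻¹ • R12H M (M + N) ι hb (u + v)) *
      R12H M (M + N) ι hb (-(u + v)) = 1 := by
    have h := R12H_unit (M := M) (n := M + N) (ι := ι) hb (u + v)
    rw [smul_mul_assoc, h, smul_smul, inv_mul_cancel₀ hcp, one_smul]
  have hRc : R12H M (M + N) ι hb (-(u - v)) *
      ((hb ^ 2 - (u - v) ^ 2)⁻¹ • R12H M (M + N) ι hb (u - v)) = 1 := by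
    have h := R12H_unit (M := M) (n := M + N) (ι := ι) hb (-(u - v))
    rw [neg_neg, neg_sq] at h
    rw [mul_smul_comm, h, smul_smul, inv_mul_cancel₀ hcm, one_smul]
  have hRd : ((hb ^ 2 - (u - v) ^ 2)⁻¹ • R12H M (M + N) ι hb (u - v)) *
      R12H M (M + N) ι hb (-(u - v)) = 1 := by
    have h := R12H_unit (M := M) (n := M + N) (ι := ι) hb (u - v)
    rw [smul_mul_assoc, h, smul_smul, inv_mul_cancel₀ hcm, one_smul]
  have hP2 : P12H M (M + N) ι * P12H M (M + N) ι = 1 := P12H_sq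
  -- the RTT relation with the two auxiliary spaces interchanged
  have hswap : ∀ a ∈ D, ∀ b ∈ D,
      R12H M (M + N) ι hb (a - b) * opT2 (T a) * opT1 M (M + N) (T b)
        = opT1 M (M + N) (T b) * opT2 (T a) * R12H M (M + N) ι hb (a - b) := by
    intro a ha b hb'
    have h := hRTT a ha b hb'
    have h2 := congrArg (fun Z => P12H M (M + N) ι * Z * P12H M (M + N) ι) h
    simp only [← conj_mul' hP2] at h2
    simp only [conjP_R, conjP_opT1, conjP_opT2] at h2
    exact h2
  have hA : R12H M (M + N) ι hb (u - v) * (opT1 M (M + N) (T u) * opT2 (T v))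
      = opT2 (T v) * (opT1 M (M + N) (T u) * R12H M (M + N) ι hb (u - v)) := by
    have h := hRTT u hu v hv
    simpa only [mul_assoc] using h
  have hB : opT1 M (M + N) ((T (-u))⁻¹) *
        (R12H M (M + N) ι hb (u + v) * opT2 (T v))
      = opT2 (T v) * (R12H M (M + N) ι hb (u + v) * opT1 M (M + N) ((T (-u))⁻¹)) := by
    have h0 := hRTT (-u) hmu v hv
    rw [show -u - v = -(u + v) from by ring] at h0
    simp only [mul_assoc] at h0
    have h1 := step_inv hRa hRb hS1a hS1b h0
    simp only [smul_mul_assoc, mul_smul_comm] at h1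
    have h2 := congrArg (fun Z => (hb ^ 2 - (u + v) ^ 2) • Z) h1
    simpa only [smul_smul, mul_inv_cancel₀ hcp, one_smul] using h2
  have hC : opT2 ((T (-v))⁻¹) *
        (R12H M (M + N) ι hb (u + v) * opT1 M (M + N) (T u))
      = opT1 M (M + N) (T u) * (R12H M (M + N) ι hb (u + v) * opT2 ((T (-v))⁻¹)) := by
    have h0 := hswap (-v) hmv u hu
    rw [show -v - u = -(u + v) from by ring] at h0
    simp only [mul_assoc] at h0
    have h1 := step_inv hRa hRb hS2a hS2b h0
    simp only [smul_mul_assoc, mul_smul_comm] at h1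
    have h2 := congrArg (fun Z => (hb ^ 2 - (u + v) ^ 2) • Z) h1
    simpa only [smul_smul, mul_inv_cancel₀ hcp, one_smul] using h2
  have hDD : R12H M (M + N) ι hb (u - v) *
        (opT1 M (M + N) ((T (-u))⁻¹) * opT2 ((T (-v))⁻¹))
      = opT2 ((T (-v))⁻¹) *
        (opT1 M (M + N) ((T (-u))⁻¹) * R12H M (M + N) ι hb (u - v)) := by
    have h0 := hRTT (-u) hmu (-v) hmv
    rw [show -u - -v = -(u - v) from by ring] at h0
    simp only [mul_assoc] at h0
    have h1 := step_inv2 hRc hRd hS1a hS1b hS2a hS2b h0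
    simp only [smul_mul_assoc, mul_smul_comm] at h1
    have h2 := congrArg (fun Z => (hb ^ 2 - (u - v) ^ 2) • Z) h1
    have h3 := h2
    simp only [smul_smul, mul_inv_cancel₀ hcm, one_smul] at h3
    exact h3.symm
  have h1c : opT1 M (M + N) (KH (K u)) * opT2 (T v)
      = opT2 (T v) * opT1 M (M + N) (KH (K u)) := by
    rw [opT1_K (K u) (hKpar u)]
    exact m1_comm _ _
  have h2c : opT1 M (M + N) ((T (-u))⁻¹) * opT2 (KH (K v))
      = opT2 (KH (K v)) * opT1 M (M + N) ((T (-u))⁻¹) :=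
    comm2 (K v) (hKpar v) _
  have h3c : opT2 (KH (K v)) * opT1 M (M + N) (T u)
      = opT1 M (M + N) (T u) * opT2 (KH (K v)) :=
    (comm2 (K v) (hKpar v) _).symm
  have h4c : opT1 M (M + N) (KH (K u)) * opT2 ((T (-v))⁻¹)
      = opT2 ((T (-v))⁻¹) * opT1 M (M + N) (KH (K u)) := by
    rw [opT1_K (K u) (hKpar u)]
    exact m1_comm _ _
  have hF : R12H M (M + N) ι hb (u - v) *
        (opT1 M (M + N) (KH (K u)) *
          (R12H M (M + N) ι hb (u + v) * opT2 (KH (K v))))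
      = opT2 (KH (K v)) *
        (R12H M (M + N) ι hb (u + v) *
          (opT1 M (M + N) (KH (K u)) * R12H M (M + N) ι hb (u - v))) := by
    have hg := hKre u v
    rw [R21_eq, R21_eq] at hg
    have h2 := congrArg (Phi (M + N) ι) hg
    simp only [Phi_mul] at h2
    simp only [← R12H_eq, ← opT2KH_eq, ← opT1_K (K u) (hKpar u)] at h2
    simpa only [mul_assoc] using h2
  rw [R21H_eq, R21H_eq, opT1_mul, opT1_mul, opT2_mul, opT2_mul]
  exact refl_chain _ _ _ _ _ _ _ _ hA hB hC hDD h1c h2c h3c h4c hF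


end SuperSpin
end
end
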